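/- arXiv:1312.1986 — 3 statements merged into one kernel-verified Lean document; each statement's English description precedes it below -/
import Mathlib

section
/- For every state i and every positive integer θ, writing Ê = E_i[min(T_i, θ)], one has (1 − P_i(T_i > θ))/Ê − π_i = (1/Ê) · ( π_i · Σ_{q ∈ Σ, q ≠ i} P_i(X_θ = q and T_i > θ) · E_q[T_i] − P_i(T_i > θ) ). (This is the identity (1 − P_i(T_i > θ))/E_i[T̂_i^{(t)}] − π_i = (P_i(T_i > θ)/E_i[T̂_i^{(t)}])·(Γ_i − 1) of the paper, with Γ_i rewritten via Z_ii − Z_qi = π_i E_q[T_i].) -/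
open MeasureTheory ProbabilityTheory Finset Set
open scoped ENNReal NNReal Classical

namespace LocalStationary

noncomputable section

/-- First return time (≥ 1) of a trajectory `f` to the state `i`, valued in `ℕ∞`
(it equals `⊤` if the trajectory never returns to `i`). -/
def hit {S : Type*} (i : S) (f : ℕ → S) : ℕ∞ :=
  sInf {n : ℕ∞ | ∃ m : ℕ, n = m ∧ 1 ≤ m ∧ f m = i}

/-- Truncated return time `min(T_i, θ)` as a natural number. -/
def truncHit {S : Type*} (i : S) (θ : ℕ) (f : ℕ → S) : ℕ :=
  (min (hit i f) (θ : ℕ∞)).toNat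


section HitLemmas

variable {S : Type*} {i : S} {f : ℕ → S}

lemma lt_hit_iff (k : ℕ) : (k : ℕ∞) < hit i f ↔ ∀ m : ℕ, 1 ≤ m → m ≤ k → f m ≠ i := by
  constructor
  · intro h m h1 hk hfm
    have hmem : (m : ℕ∞) ∈ {n : ℕ∞ | ∃ m : ℕ, n = m ∧ 1 ≤ m ∧ f m = i} := ⟨m, rfl, h1, hfm⟩
    have hle : hit i f ≤ m := sInf_le hmem
    have hlt : (k : ℕ∞) < (m : ℕ∞) := lt_of_lt_of_le h hle
    exact absurd (by exact_mod_cast hlt) (by omega)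
  · intro h
    have hle : (k : ℕ∞) + 1 ≤ hit i f := by
      apply le_sInf
      rintro n ⟨m, rfl, h1, hfm⟩
      have hkm : k < m := by
        by_contra hc
        exact h m h1 (by omega) hfm
      exact_mod_cast hkm
    calc (k : ℕ∞) < (k : ℕ∞) + 1 := (ENat.lt_add_one_iff (ENat.coe_ne_top k)).2 le_rfl
      _ ≤ hit i f := hle

lemma hit_pos : (0 : ℕ∞) < hit i f := by
  rw [show ((0:ℕ∞)) = ((0:ℕ):ℕ∞) by norm_cast, lt_hit_iff]
  intro m h1 h0; omega

lemma hit_ne_zero : hit i f ≠ 0 := (hit_pos).ne'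

lemma hit_le_iff (n : ℕ) : hit i f ≤ (n : ℕ∞) ↔ ∃ m : ℕ, 1 ≤ m ∧ m ≤ n ∧ f m = i := by
  rw [← not_lt, lt_hit_iff]
  push_neg
  tauto

lemma coe_le_hit_iff (n : ℕ) (hn : 1 ≤ n) :
    (n : ℕ∞) ≤ hit i f ↔ ((n - 1 : ℕ) : ℕ∞) < hit i f := by
  rw [← ENat.add_one_le_iff (ENat.coe_ne_top (n-1))]
  have h1 : ((n - 1 : ℕ) : ℕ∞) + 1 = (n : ℕ∞) := by
    have h2 : ((n - 1) + 1 : ℕ) = n := by omega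
    exact_mod_cast congrArg (Nat.cast : ℕ → ℕ∞) h2
  rw [h1]

lemma hit_eq_top_iff : hit i f = ⊤ ↔ ∀ m : ℕ, 1 ≤ m → f m ≠ i := by
  rw [hit, sInf_eq_top]
  constructor
  · intro h m h1 hfm
    exact (ENat.coe_ne_top m) (h _ ⟨m, rfl, h1, hfm⟩)
  · rintro h n ⟨m, rfl, h1, hfm⟩
    exact absurd hfm (h m h1)

lemma hit_eq_coe_iff (n : ℕ) (hn : 1 ≤ n) :
    hit i f = (n : ℕ∞) ↔ f n = i ∧ ∀ m : ℕ, 1 ≤ m → m < n → f m ≠ i := by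
  constructor
  · intro h
    obtain ⟨m, h1, hmn, hfm⟩ := (hit_le_iff n).1 (le_of_eq h)
    have hgt : ((n-1 : ℕ) : ℕ∞) < hit i f := by
      rw [h]; exact_mod_cast (by omega : n - 1 < n)
    have havoid := (lt_hit_iff (n-1)).1 hgt
    have hmeq : m = n := by
      by_contra hc
      exact havoid m h1 (by omega) hfm
    subst hmeq
    exact ⟨hfm, fun m h1 hlt => havoid m h1 (by omega)⟩
  · rintro ⟨hfn, havoid⟩
    have hle : hit i f ≤ (n : ℕ∞) := (hit_le_iff n).2 ⟨n, hn, le_refl n, hfn⟩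
    have hge : (n : ℕ∞) ≤ hit i f := (coe_le_hit_iff n hn).2
      ((lt_hit_iff (n-1)).2 (fun m h1 hm => havoid m h1 (by omega)))
    exact le_antisymm hle hge

lemma toNat_eq_iff_of_ne_top {a : ℕ∞} (ha : a ≠ ⊤) (n : ℕ) : a.toNat = n ↔ a = (n : ℕ∞) := by
  constructor
  · intro h; rw [← h, ENat.coe_toNat ha]
  · intro h; simp [h]

lemma min_hit_ne_top (θ : ℕ) : min (hit i f) (θ : ℕ∞) ≠ ⊤ :=
  fun h => (ENat.coe_ne_top θ) (top_le_iff.1 (h ▸ min_le_right (hit i f) (θ : ℕ∞)))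

lemma truncHit_eq_iff (θ n : ℕ) :
    truncHit i θ f = n ↔ min (hit i f) (θ : ℕ∞) = (n : ℕ∞) :=
  toNat_eq_iff_of_ne_top (min_hit_ne_top θ) n

lemma truncHit_eq_theta_iff (θ : ℕ) (hθ : 1 ≤ θ) :
    truncHit i θ f = θ ↔ ((θ - 1 : ℕ) : ℕ∞) < hit i f := by
  rw [truncHit_eq_iff]
  constructor
  · intro h
    exact (coe_le_hit_iff θ hθ).1 (min_eq_right_iff.1 h)
  · intro h
    exact min_eq_right_iff.2 ((coe_le_hit_iff θ hθ).2 h)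

lemma truncHit_eq_lt_iff (θ n : ℕ) (hn : n < θ) :
    truncHit i θ f = n ↔ hit i f = (n : ℕ∞) := by
  rw [truncHit_eq_iff]
  constructor
  · intro h
    rcases le_total (hit i f) ((θ : ℕ∞)) with hle | hle
    · rwa [min_eq_left hle] at h
    · rw [min_eq_right hle] at h
      exact absurd (by exact_mod_cast h : θ = n) (by omega)
  · intro h
    rw [min_eq_left (by rw [h]; exact_mod_cast hn.le)]
    exact h

lemma truncHit_le (θ : ℕ) : truncHit i θ f ≤ θ := by
  have h := min_le_right (hit i f) (θ : ℕ∞)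
  have := ENat.toNat_le_toNat h (ENat.coe_ne_top θ)
  simpa [truncHit] using this

lemma one_le_truncHit (θ : ℕ) (hθ : 1 ≤ θ) : 1 ≤ truncHit i θ f := by
  have h1 : (1 : ℕ∞) ≤ min (hit i f) (θ : ℕ∞) := by
    apply le_min
    · exact ENat.one_le_iff_ne_zero.2 hit_ne_zero
    · exact_mod_cast hθ
  have := ENat.toNat_le_toNat h1 (min_hit_ne_top θ)
  simpa [truncHit] using this

lemma truncHit_of_ne_top (θ : ℕ) (h : hit i f ≠ ⊤) :
    truncHit i θ f = min (hit i f).toNat θ := by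
  set n := (hit i f).toNat with hn
  have hcoe : hit i f = (n : ℕ∞) := (ENat.coe_toNat h).symm
  rw [truncHit_eq_iff, hcoe]
  rcases le_total n θ with hc | hc
  · rw [min_eq_left (by exact_mod_cast hc : (n:ℕ∞) ≤ (θ:ℕ∞)), min_eq_left hc]
  · rw [min_eq_right (by exact_mod_cast hc : (θ:ℕ∞) ≤ (n:ℕ∞)), min_eq_right hc]

end HitLemmas

section MeasAux

variable {S : Type*} [MeasurableSpace S] [MeasurableSingletonClass S] [Countable S]

lemma measurableSet_coord (n : ℕ) (y : S) : MeasurableSet {f : ℕ → S | f n = y} :=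
  show MeasurableSet ((fun f : ℕ → S => f n) ⁻¹' {y}) from
    (measurable_pi_apply n) (measurableSet_singleton y)

lemma measurableSet_imp {α : Type*} [MeasurableSpace α] (p : Prop) {A : Set α}
    (h : MeasurableSet A) : MeasurableSet {x | p → x ∈ A} := by
  by_cases hp : p
  · simpa [hp] using h
  · simp [hp]

lemma measurableSet_avoid (i : S) (n : ℕ) :
    MeasurableSet {f : ℕ → S | ∀ m : ℕ, 1 ≤ m → m ≤ n → f m ≠ i} := by
  have heq : {f : ℕ → S | ∀ m : ℕ, 1 ≤ m → m ≤ n → f m ≠ i} =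
      ⋂ m : ℕ, {f : ℕ → S | 1 ≤ m → f ∈ {g : ℕ → S | m ≤ n → g ∈ {g : ℕ → S | g m = i}ᶜ}} := by
    ext f
    simp only [Set.mem_iInter, Set.mem_setOf_eq, Set.mem_compl_iff]
  rw [heq]
  exact MeasurableSet.iInter fun m =>
    measurableSet_imp _ (measurableSet_imp _ (measurableSet_coord m i).compl)

lemma measurableSet_hitGt (i : S) (k : ℕ) :
    MeasurableSet {f : ℕ → S | (k : ℕ∞) < hit i f} := by
  have heq : {f : ℕ → S | (k : ℕ∞) < hit i f} =
      {f : ℕ → S | ∀ m : ℕ, 1 ≤ m → m ≤ k → f m ≠ i} := by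
    ext f; exact lt_hit_iff k
  rw [heq]; exact measurableSet_avoid i k

lemma measurableSet_hitTop (i : S) : MeasurableSet {f : ℕ → S | hit i f = ⊤} := by
  have heq : {f : ℕ → S | hit i f = ⊤} =
      ⋂ m : ℕ, {f : ℕ → S | 1 ≤ m → f ∈ {g : ℕ → S | g m = i}ᶜ} := by
    ext f
    simp only [Set.mem_iInter, Set.mem_setOf_eq, Set.mem_compl_iff]
    exact hit_eq_top_iff
  rw [heq]
  exact MeasurableSet.iInter fun m => measurableSet_imp _ (measurableSet_coord m i).compl

lemma measurableSet_hitEq (i : S) (n : ℕ) (hn : 1 ≤ n) :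
    MeasurableSet {f : ℕ → S | hit i f = (n : ℕ∞)} := by
  have heq : {f : ℕ → S | hit i f = (n : ℕ∞)} =
      {f : ℕ → S | f n = i} ∩ {f : ℕ → S | ∀ m : ℕ, 1 ≤ m → m ≤ n - 1 → f m ≠ i} := by
    ext f
    rw [Set.mem_inter_iff]
    simp only [Set.mem_setOf_eq]
    rw [hit_eq_coe_iff n hn]
    constructor
    · rintro ⟨h1, h2⟩; exact ⟨h1, fun m a b => h2 m a (by omega)⟩
    · rintro ⟨h1, h2⟩; exact ⟨h1, fun m a b => h2 m a (by omega)⟩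
  rw [heq]
  exact (measurableSet_coord n i).inter (measurableSet_avoid i (n-1))

lemma measurable_hitToNat (i : S) : Measurable (fun f : ℕ → S => (hit i f).toNat) := by
  apply measurable_to_countable'
  intro n
  rcases Nat.eq_zero_or_pos n with h | h
  · subst h
    have heq : (fun f : ℕ → S => (hit i f).toNat) ⁻¹' {0} = {f : ℕ → S | hit i f = ⊤} := by
      ext f
      simp only [Set.mem_preimage, Set.mem_singleton_iff, Set.mem_setOf_eq, ENat.toNat_eq_zero]
      exact ⟨fun h => h.resolve_left hit_ne_zero, Or.inr⟩
    rw [heq]; exact measurableSet_hitTop i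
  · have heq : (fun f : ℕ → S => (hit i f).toNat) ⁻¹' {n} = {f : ℕ → S | hit i f = (n : ℕ∞)} := by
      ext f
      simp only [Set.mem_preimage, Set.mem_singleton_iff, Set.mem_setOf_eq]
      constructor
      · intro hh
        rcases eq_or_ne (hit i f) ⊤ with ht | ht
        · rw [ht] at hh; simp at hh; omega
        · rw [← hh, ENat.coe_toNat ht]
      · intro hh; rw [hh]; simp
    rw [heq]; exact measurableSet_hitEq i n h

lemma measurable_truncHit (i : S) (θ : ℕ) (hθ : 1 ≤ θ) :
    Measurable (fun f : ℕ → S => truncHit i θ f) := by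
  apply measurable_to_countable'
  intro n
  by_cases hn : n = θ
  · subst hn
    have heq : (fun f : ℕ → S => truncHit i n f) ⁻¹' {n} =
        {f : ℕ → S | ((n - 1 : ℕ) : ℕ∞) < hit i f} := by
      ext f
      simp only [Set.mem_preimage, Set.mem_singleton_iff, Set.mem_setOf_eq]
      exact truncHit_eq_theta_iff n hθ
    rw [heq]; exact measurableSet_hitGt i (n-1)
  · by_cases hlt : n < θ
    · rcases Nat.eq_zero_or_pos n with h0 | h0
      · subst h0
        have heq : (fun f : ℕ → S => truncHit i θ f) ⁻¹' {0} = ∅ := by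
          ext f
          simp only [Set.mem_preimage, Set.mem_singleton_iff, Set.mem_empty_iff_false, iff_false]
          rw [truncHit_eq_lt_iff θ 0 hlt]
          exact_mod_cast hit_ne_zero
        rw [heq]; exact MeasurableSet.empty
      · have heq : (fun f : ℕ → S => truncHit i θ f) ⁻¹' {n} =
            {f : ℕ → S | hit i f = (n : ℕ∞)} := by
          ext f
          simp only [Set.mem_preimage, Set.mem_singleton_iff, Set.mem_setOf_eq]
          exact truncHit_eq_lt_iff θ n hlt
        rw [heq]; exact measurableSet_hitEq i n h0
    · have heq : (fun f : ℕ → S => truncHit i θ f) ⁻¹' {n} = ∅ := by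
        ext f
        simp only [Set.mem_preimage, Set.mem_singleton_iff, Set.mem_empty_iff_false, iff_false]
        intro hc
        have := truncHit_le (i := i) (f := f) θ
        omega
      rw [heq]; exact MeasurableSet.empty

end MeasAux

/-- Number of visits to `j` among the first `min(T_i, θ)` steps of the trajectory. -/
def visits {S : Type*} (i j : S) (θ : ℕ) (f : ℕ → S) : ℕ :=
  ((Finset.Icc 1 (truncHit i θ f)).filter fun s => f s = j).card

/-- A discrete-time time-homogeneous Markov chain on a state space `S`, described by
the laws `μ x` of its trajectories started at each state `x`, together with its
transition matrix `trans`. -/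
structure Chain (S : Type*) [MeasurableSpace S] where
  μ : S → Measure (ℕ → S)
  isProb : ∀ x, IsProbabilityMeasure (μ x)
  start : ∀ x, μ x {f | f 0 = x} = 1
  trans : S → S → ℝ≥0∞
  trans_sum : ∀ x, ∑' y, trans x y = 1
  markov : ∀ x (n : ℕ) (s : ℕ → S),
    μ x {f | ∀ k ≤ n + 1, f k = s k} =
      μ x {f | ∀ k ≤ n, f k = s k} * trans (s n) (s (n + 1))

namespace Chain

variable {S : Type*} [MeasurableSpace S]

/-- Irreducibility: from every state one can reach every other state. -/
def Irreducible (C : Chain S) : Prop :=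
  ∀ x y : S, ∃ n : ℕ, 0 < C.μ x {f | f n = y}

/-- Positive recurrence: the return time to each state is almost surely finite and
has finite expectation. -/
def PositiveRecurrent (C : Chain S) : Prop :=
  ∀ x : S, C.μ x {f | hit x f = ⊤} = 0 ∧
    Integrable (fun f => ((hit x f).toNat : ℝ)) (C.μ x)

/-- Aperiodicity: for each state, the only common divisor of the possible return
times is `1`. -/
def Aperiodic (C : Chain S) : Prop :=
  ∀ x : S, ∀ d : ℕ, (∀ n : ℕ, 1 ≤ n → 0 < C.μ x {f | f n = x} → d ∣ n) → d ∣ 1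

/-- `E_x[T_i]`, the expected hitting time of `i` starting from `x`. -/
def ERet (C : Chain S) (x i : S) : ℝ :=
  ∫ f, ((hit i f).toNat : ℝ) ∂ C.μ x

/-- The stationary probability `π_i = 1 / E_i[T_i]`. -/
def statPi (C : Chain S) (i : S) : ℝ := (C.ERet i i)⁻¹

/-- The truncated mean `E_i[min(T_i, θ)]`. -/
def EThat (C : Chain S) (i : S) (θ : ℕ) : ℝ :=
  ∫ f, (truncHit i θ f : ℝ) ∂ C.μ i

/-- `E_i[F̂_j] = E_i[Σ_{s=1}^{min(T_i,θ)} 1{X_s = j}]`. -/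
def EVisits (C : Chain S) (i j : S) (θ : ℕ) : ℝ :=
  ∫ f, (visits i j θ f : ℝ) ∂ C.μ i

/-- `P_i(T_i > k)`, as a real number. -/
def tailP (C : Chain S) (i : S) (k : ℕ) : ℝ :=
  (C.μ i {f | (k : ℕ∞) < hit i f}).toReal

/-- The maximal hitting time `H_i = max_x E_x[T_i]`. -/
def maxHit (C : Chain S) (i : S) : ℝ := ⨆ x : S, C.ERet x i

/-- Entry `Z_{jk} = Σ_{t=0}^∞ (P^{(t)}_{jk} − π_k)` of the fundamental matrix. -/
def Zfun (C : Chain S) (j k : S) : ℝ :=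
  ∑' t : ℕ, ((C.μ j {f | f t = k}).toReal - C.statPi k)

/-- `Z_max(i) = max_k |Z_{ki}|`. -/
def Zmax (C : Chain S) (i : S) : ℝ := ⨆ k : S, |C.Zfun k i|

end Chain




section Cylinders

variable {S : Type*} [MeasurableSpace S] [MeasurableSingletonClass S] [Countable S]

def extv (n : ℕ) (v : Fin (n+1) → S) : ℕ → S :=
  fun k => v ⟨min k n, Nat.lt_succ_of_le (min_le_right k n)⟩

def cyl (n : ℕ) (v : Fin (n+1) → S) : Set (ℕ → S) := {f | ∀ k ≤ n, f k = extv n v k}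

lemma extv_eq (n : ℕ) (v : Fin (n+1) → S) (k : ℕ) (hk : k ≤ n) :
    extv n v k = v ⟨k, Nat.lt_succ_of_le hk⟩ := by
  unfold extv
  congr 1
  exact Fin.ext (by simpa using min_eq_left hk)

lemma mem_cyl_iff (n : ℕ) (v : Fin (n+1) → S) (f : ℕ → S) :
    f ∈ cyl n v ↔ ∀ k : Fin (n+1), f k = v k := by
  constructor
  · intro h k
    have h2 := h k (Nat.lt_succ_iff.1 k.isLt)
    rwa [extv_eq n v k (Nat.lt_succ_iff.1 k.isLt), Fin.eta] at h2
  · intro h k hk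
    rw [extv_eq n v k hk]
    exact h ⟨k, Nat.lt_succ_of_le hk⟩

lemma self_mem_cyl (n : ℕ) (f : ℕ → S) : f ∈ cyl n (fun k : Fin (n+1) => f k) :=
  (mem_cyl_iff n _ f).2 fun k => rfl

lemma measurableSet_cyl (n : ℕ) (v : Fin (n+1) → S) : MeasurableSet (cyl n v) := by
  have heq : cyl n v = ⋂ k : ℕ, {f : ℕ → S | k ≤ n → f ∈ {g : ℕ → S | g k = extv n v k}} := by
    ext f; simp only [Set.mem_iInter, Set.mem_setOf_eq]; rfl
  rw [heq]
  exact MeasurableSet.iInter fun k => measurableSet_imp _ (measurableSet_coord k (extv n v k))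

lemma cyl_disjoint (n : ℕ) {v w : Fin (n+1) → S} (hvw : v ≠ w) :
    Disjoint (cyl n v) (cyl n w) := by
  rw [Set.disjoint_left]
  intro f hfv hfw
  apply hvw
  funext k
  rw [← (mem_cyl_iff n v f).1 hfv k, ← (mem_cyl_iff n w f).1 hfw k]

lemma measure_eq_tsum_cyl (μ : Measure (ℕ → S)) {B : Set (ℕ → S)} (hB : MeasurableSet B)
    (n : ℕ) : μ B = ∑' v : Fin (n+1) → S, μ (B ∩ cyl n v) := by
  have hU : B = ⋃ v : Fin (n+1) → S, B ∩ cyl n v := by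
    ext f
    constructor
    · intro hf
      exact Set.mem_iUnion.2 ⟨fun k : Fin (n+1) => f k, hf, self_mem_cyl n f⟩
    · rintro hf
      obtain ⟨v, hfv, -⟩ := Set.mem_iUnion.1 hf
      exact hfv
  conv_lhs => rw [hU]
  exact measure_iUnion
    (fun v w hvw => Disjoint.mono inter_subset_right inter_subset_right (cyl_disjoint n hvw))
    (fun v => hB.inter (measurableSet_cyl n v))

lemma measure_eq_tsum_coord (μ : Measure (ℕ → S)) {B : Set (ℕ → S)} (hB : MeasurableSet B)
    (j : ℕ) : μ B = ∑' q : S, μ (B ∩ {f | f j = q}) := by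
  have hU : B = ⋃ q : S, B ∩ {f : ℕ → S | f j = q} := by
    ext f
    constructor
    · intro hf
      exact Set.mem_iUnion.2 ⟨f j, hf, rfl⟩
    · rintro hf
      obtain ⟨q, hfq, -⟩ := Set.mem_iUnion.1 hf
      exact hfq
  conv_lhs => rw [hU]
  refine measure_iUnion ?_ (fun q => hB.inter (measurableSet_coord j q))
  intro q r hqr
  refine Disjoint.mono inter_subset_right inter_subset_right ?_
  rw [Set.disjoint_left]
  intro f hfq hfr
  exact hqr (hfq.symm.trans hfr)

lemma inter_cyl_eq (B : Set (ℕ → S)) (n : ℕ) (v : Fin (n+1) → S)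
    (hdet : ∀ f g : ℕ → S, (∀ k ≤ n, f k = g k) → f ∈ B → g ∈ B) :
    B ∩ cyl n v = if extv n v ∈ B then cyl n v else ∅ := by
  by_cases h : extv n v ∈ B
  · rw [if_pos h]
    refine subset_antisymm inter_subset_right (fun f hf => ⟨?_, hf⟩)
    exact hdet _ _ (fun k hk => (hf k hk).symm) h
  · rw [if_neg h]
    refine subset_antisymm ?_ (empty_subset _)
    rintro f ⟨hfB, hfc⟩
    exact absurd (hdet f _ (fun k hk => hfc k hk) hfB) h

end Cylinders

namespace Chain

variable {S : Type*} [MeasurableSpace S] [MeasurableSingletonClass S] [Countable S]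

/-- The snoc equivalence. -/
def snocEquiv (S : Type*) (n : ℕ) : ((Fin (n+1) → S) × S) ≃ (Fin (n+2) → S) where
  toFun p := Fin.snoc p.1 p.2
  invFun v := (Fin.init v, v (Fin.last (n+1)))
  left_inv p := by
    ext k
    · simp [Fin.init_snoc]
    · simp [Fin.snoc_last]
  right_inv v := by
    simp [Fin.snoc_init_self]

lemma markov_cyl (C : Chain S) (x : S) (n : ℕ) (v : Fin (n+2) → S) :
    C.μ x (cyl (n+1) v) =
      C.μ x (cyl n (Fin.init v)) * C.trans (v ⟨n, by omega⟩) (v (Fin.last (n+1))) := by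
  have h1 : cyl (n+1) v = {f : ℕ → S | ∀ k ≤ n + 1, f k = extv (n+1) v k} := rfl
  have hpt : ∀ k ≤ n, extv n (Fin.init v) k = extv (n+1) v k := by
    intro k hk
    rw [extv_eq n _ k hk, extv_eq (n+1) v k (by omega)]
    rfl
  have h2 : cyl n (Fin.init v) = {f : ℕ → S | ∀ k ≤ n, f k = extv (n+1) v k} := by
    ext f
    refine forall_congr' fun k => imp_congr_right fun hk => ?_
    rw [hpt k hk]
  have h3 : extv (n+1) v n = v ⟨n, by omega⟩ := extv_eq (n+1) v n (by omega)
  have h4 : extv (n+1) v (n+1) = v (Fin.last (n+1)) := extv_eq (n+1) v (n+1) (le_refl _)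
  rw [h1, h2, ← h3, ← h4]
  exact C.markov x n (extv (n+1) v)

lemma startProb (C : Chain S) (x r : S) :
    C.μ x {f : ℕ → S | f 0 = r} = if r = x then 1 else 0 := by
  haveI := C.isProb x
  by_cases h : r = x
  · rw [if_pos h, h]; exact C.start x
  · rw [if_neg h]
    have hsub : {f : ℕ → S | f 0 = r} ⊆ {f : ℕ → S | f 0 = x}ᶜ := by
      intro f hf hx
      exact h (hf ▸ (hx ▸ rfl : f 0 = x) ▸ rfl)
    refine le_antisymm (le_trans (measure_mono hsub) ?_) zero_le
    rw [measure_compl (measurableSet_coord 0 x) (measure_ne_top _ _), C.start x]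
    simp

lemma onestep (C : Chain S) (x y : S) (n : ℕ) (E : Set (ℕ → S)) (hE : MeasurableSet E)
    (hdet : ∀ f g : ℕ → S, (∀ k ≤ n, f k = g k) → f ∈ E → g ∈ E) :
    C.μ x (E ∩ {f | f (n+1) = y}) = ∑' r : S, C.μ x (E ∩ {f | f n = r}) * C.trans r y := by
  classical
  -- determination of the bigger event
  have hdet' : ∀ f g : ℕ → S, (∀ k ≤ n + 1, f k = g k) →
      f ∈ E ∩ {f : ℕ → S | f (n+1) = y} → g ∈ E ∩ {f : ℕ → S | f (n+1) = y} := by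
    rintro f g hagree ⟨hfE, hfy⟩
    exact ⟨hdet f g (fun k hk => hagree k (by omega)) hfE,
      by rw [Set.mem_setOf_eq, ← hagree (n+1) (le_refl _)]; exact hfy⟩
  have hmeasE1 : MeasurableSet (E ∩ {f : ℕ → S | f (n+1) = y}) :=
    hE.inter (measurableSet_coord (n+1) y)
  -- LHS as a sum over cylinders of length n+2
  rw [measure_eq_tsum_cyl (C.μ x) hmeasE1 (n+1)]
  -- termwise rewriting
  have hterm : ∀ v : Fin (n+2) → S,
      C.μ x ((E ∩ {f : ℕ → S | f (n+1) = y}) ∩ cyl (n+1) v) =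
        if (extv (n+1) v ∈ E ∧ v (Fin.last (n+1)) = y) then
          C.μ x (cyl n (Fin.init v)) * C.trans (v ⟨n, by omega⟩) (v (Fin.last (n+1)))
        else 0 := by
    intro v
    rw [inter_cyl_eq _ (n+1) v hdet']
    have hmem : extv (n+1) v ∈ E ∩ {f : ℕ → S | f (n+1) = y} ↔
        (extv (n+1) v ∈ E ∧ v (Fin.last (n+1)) = y) := by
      rw [Set.mem_inter_iff, Set.mem_setOf_eq, extv_eq (n+1) v (n+1) (le_refl _)]
      rfl
    by_cases h : extv (n+1) v ∈ E ∧ v (Fin.last (n+1)) = y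
    · rw [if_pos (hmem.2 h), if_pos h, markov_cyl]
    · rw [if_neg (fun hc => h (hmem.1 hc)), if_neg h, measure_empty]
  rw [tsum_congr hterm]
  -- reindex via snoc
  rw [← (snocEquiv S n).tsum_eq]
  have hterm2 : ∀ p : (Fin (n+1) → S) × S,
      (if (extv (n+1) (snocEquiv S n p) ∈ E ∧ (snocEquiv S n p) (Fin.last (n+1)) = y) then
          C.μ x (cyl n (Fin.init (snocEquiv S n p))) *
            C.trans ((snocEquiv S n p) ⟨n, by omega⟩) ((snocEquiv S n p) (Fin.last (n+1)))
        else 0) =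
      (if (extv n p.1 ∈ E ∧ p.2 = y) then
          C.μ x (cyl n p.1) * C.trans (p.1 (Fin.last n)) p.2
        else 0) := by
    rintro ⟨u, s⟩
    have hsnoc_last : (snocEquiv S n (u, s)) (Fin.last (n+1)) = s := by
      simp [snocEquiv]
    have hsnoc_init : Fin.init (snocEquiv S n (u, s)) = u := by
      simp [snocEquiv]
    have hsnoc_n : (snocEquiv S n (u, s)) ⟨n, by omega⟩ = u (Fin.last n) := by
      simp only [snocEquiv, Equiv.coe_fn_mk]
      exact @Fin.snoc_castSucc (n+1) (fun _ => S) s u (Fin.last n)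
    have hagree : ∀ k ≤ n, extv (n+1) (snocEquiv S n (u, s)) k = extv n u k := by
      intro k hk
      rw [extv_eq (n+1) _ k (by omega), extv_eq n u k hk]
      simp only [snocEquiv, Equiv.coe_fn_mk]
      exact @Fin.snoc_castSucc (n+1) (fun _ => S) s u ⟨k, Nat.lt_succ_of_le hk⟩
    have hmemE : extv (n+1) (snocEquiv S n (u, s)) ∈ E ↔ extv n u ∈ E := by
      constructor
      · exact fun h => hdet _ _ hagree h
      · exact fun h => hdet _ _ (fun k hk => (hagree k hk).symm) h
    rw [hsnoc_last, hsnoc_init, hsnoc_n]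
    by_cases h : extv n u ∈ E ∧ s = y
    · rw [if_pos ⟨hmemE.2 h.1, h.2⟩, if_pos h]
    · rw [if_neg (fun hc => h ⟨hmemE.1 hc.1, hc.2⟩), if_neg h]
  rw [tsum_congr hterm2]
  -- split the product tsum
  rw [ENNReal.tsum_prod']
  -- inner sums collapse at s = y
  have hinner : ∀ u : Fin (n+1) → S,
      (∑' s : S, if (extv n u ∈ E ∧ s = y) then
          C.μ x (cyl n u) * C.trans (u (Fin.last n)) s else 0) =
      if extv n u ∈ E then C.μ x (cyl n u) * C.trans (u (Fin.last n)) y else 0 := by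
    intro u
    rw [tsum_eq_single y (fun s hs => by
      rw [if_neg (fun hc => hs hc.2)])]
    by_cases h : extv n u ∈ E
    · rw [if_pos ⟨h, rfl⟩, if_pos h]
    · rw [if_neg (fun hc => h hc.1), if_neg h]
  rw [tsum_congr hinner]
  -- now the RHS
  have hRHS : ∀ r : S, C.μ x (E ∩ {f : ℕ → S | f n = r}) =
      ∑' u : Fin (n+1) → S, if (extv n u ∈ E ∧ u (Fin.last n) = r) then C.μ x (cyl n u) else 0 := by
    intro r
    rw [measure_eq_tsum_cyl (C.μ x) (hE.inter (measurableSet_coord n r)) n]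
    refine tsum_congr fun u => ?_
    have hdet'' : ∀ f g : ℕ → S, (∀ k ≤ n, f k = g k) →
        f ∈ E ∩ {f : ℕ → S | f n = r} → g ∈ E ∩ {f : ℕ → S | f n = r} := by
      rintro f g hagree ⟨hfE, hfr⟩
      exact ⟨hdet f g hagree hfE, by rw [Set.mem_setOf_eq, ← hagree n (le_refl _)]; exact hfr⟩
    rw [inter_cyl_eq _ n u hdet'']
    have hmem : extv n u ∈ E ∩ {f : ℕ → S | f n = r} ↔
        (extv n u ∈ E ∧ u (Fin.last n) = r) := by
      rw [Set.mem_inter_iff, Set.mem_setOf_eq, extv_eq n u n (le_refl _)]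
      rfl
    by_cases h : extv n u ∈ E ∧ u (Fin.last n) = r
    · rw [if_pos (hmem.2 h), if_pos h]
    · rw [if_neg (fun hc => h (hmem.1 hc)), if_neg h, measure_empty]
  have hR2 : ∀ r : S, C.μ x (E ∩ {f : ℕ → S | f n = r}) * C.trans r y =
      ∑' u : Fin (n+1) → S,
        (if (extv n u ∈ E ∧ u (Fin.last n) = r) then C.μ x (cyl n u) else 0) * C.trans r y := by
    intro r
    rw [hRHS r, ENNReal.tsum_mul_right]
  rw [tsum_congr hR2, ENNReal.tsum_comm]
  refine tsum_congr fun u => ?_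
  rw [tsum_eq_single (u (Fin.last n)) (fun r hr => by
    rw [if_neg (fun hc => hr hc.2.symm), zero_mul])]
  by_cases h : extv n u ∈ E
  · rw [if_pos h,
      if_pos (show extv n u ∈ E ∧ u (Fin.last n) = u (Fin.last n) from ⟨h, rfl⟩)]
  · rw [if_neg h,
      if_neg (show ¬(extv n u ∈ E ∧ u (Fin.last n) = u (Fin.last n)) from fun hc => h hc.1),
      zero_mul]

/-! ### Avoid-and-arrive events -/

def avoidAt (i : S) (n : ℕ) (r : S) : Set (ℕ → S) :=
  {f | (∀ m : ℕ, 1 ≤ m → m ≤ n → f m ≠ i) ∧ f n = r}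

def retA (i q : S) (θ : ℕ) : Set (ℕ → S) :=
  {f | f θ = q ∧ ∀ m : ℕ, 1 ≤ m → m ≤ θ → f m ≠ i}

def avoidAtQ (i q : S) (θ n : ℕ) (r : S) : Set (ℕ → S) :=
  {f | f θ = q ∧ (∀ m : ℕ, 1 ≤ m → m ≤ n → f m ≠ i) ∧ f n = r}

lemma measurableSet_avoidAt (i : S) (n : ℕ) (r : S) : MeasurableSet (avoidAt i n r) :=
  (measurableSet_avoid i n).inter (measurableSet_coord n r)

lemma measurableSet_retA (i q : S) (θ : ℕ) : MeasurableSet (retA i q θ) :=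
  (measurableSet_coord θ q).inter (measurableSet_avoid i θ)

lemma avoidAt_zero (i : S) (r : S) : avoidAt i 0 r = {f : ℕ → S | f 0 = r} := by
  ext f
  simp only [avoidAt, Set.mem_setOf_eq]
  constructor
  · rintro ⟨-, h⟩; exact h
  · intro h; exact ⟨fun m h1 h0 => absurd (le_trans h1 h0) (by omega), h⟩

lemma avoidAt_succ_i (i : S) (n : ℕ) : avoidAt i (n+1) i = ∅ := by
  ext f
  simp only [avoidAt, Set.mem_setOf_eq, Set.mem_empty_iff_false, iff_false]
  rintro ⟨havoid, hfn⟩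
  exact havoid (n+1) (by omega) (le_refl _) hfn

lemma measure_avoidAt_succ (C : Chain S) (x i : S) (n : ℕ) {r : S} (hr : r ≠ i) :
    C.μ x (avoidAt i (n+1) r) = ∑' s : S, C.μ x (avoidAt i n s) * C.trans s r := by
  have hset : avoidAt i (n+1) r =
      {f : ℕ → S | ∀ m : ℕ, 1 ≤ m → m ≤ n → f m ≠ i} ∩ {f : ℕ → S | f (n+1) = r} := by
    ext f
    simp only [avoidAt, Set.mem_setOf_eq, Set.mem_inter_iff]
    constructor
    · rintro ⟨havoid, hfn⟩
      exact ⟨fun m h1 hn => havoid m h1 (by omega), hfn⟩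
    · rintro ⟨havoid, hfn⟩
      refine ⟨fun m h1 hn => ?_, hfn⟩
      rcases Nat.lt_or_ge m (n+1) with h | h
      · exact havoid m h1 (by omega)
      · have : m = n + 1 := by omega
        rw [this, hfn]
        exact hr
  rw [hset, C.onestep x r n _ (measurableSet_avoid i n)
    (fun f g hagree hf m h1 hn => by rw [← hagree m hn]; exact hf m h1 hn)]
  refine tsum_congr fun s => ?_
  have h1 : ({f : ℕ → S | ∀ m : ℕ, 1 ≤ m → m ≤ n → f m ≠ i} ∩ {f : ℕ → S | f n = s}) =
      avoidAt i n s := by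
    ext f
    simp only [avoidAt, Set.mem_inter_iff, Set.mem_setOf_eq]
    try tauto
  rw [h1]

lemma avoidAtQ_theta (i q : S) (θ : ℕ) (r : S) :
    avoidAtQ i q θ θ r = if r = q then retA i q θ else ∅ := by
  by_cases h : r = q
  · subst h
    rw [if_pos rfl]
    ext f
    simp only [avoidAtQ, retA, Set.mem_setOf_eq]
    tauto
  · rw [if_neg h]
    ext f
    simp only [avoidAtQ, Set.mem_setOf_eq, Set.mem_empty_iff_false, iff_false]
    rintro ⟨hfq, -, hfr⟩
    exact h (hfr.symm.trans hfq)

lemma avoidAtQ_succ_i (i q : S) (θ n : ℕ) (hn : θ ≤ n) : avoidAtQ i q θ (n+1) i = ∅ := by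
  ext f
  simp only [avoidAtQ, Set.mem_setOf_eq, Set.mem_empty_iff_false, iff_false]
  rintro ⟨-, havoid, hfn⟩
  exact havoid (n+1) (by omega) (le_refl _) hfn

lemma measure_avoidAtQ_succ (C : Chain S) (i q : S) (θ n : ℕ) (hn : θ ≤ n) {r : S}
    (hr : r ≠ i) :
    C.μ i (avoidAtQ i q θ (n+1) r) = ∑' s : S, C.μ i (avoidAtQ i q θ n s) * C.trans s r := by
  have hset : avoidAtQ i q θ (n+1) r =
      ({f : ℕ → S | f θ = q ∧ ∀ m : ℕ, 1 ≤ m → m ≤ n → f m ≠ i} ∩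
        {f : ℕ → S | f (n+1) = r}) := by
    ext f
    simp only [avoidAtQ, Set.mem_setOf_eq, Set.mem_inter_iff]
    constructor
    · rintro ⟨hfq, havoid, hfn⟩
      exact ⟨⟨hfq, fun m h1 hmn => havoid m h1 (by omega)⟩, hfn⟩
    · rintro ⟨⟨hfq, havoid⟩, hfn⟩
      refine ⟨hfq, fun m h1 hmn => ?_, hfn⟩
      rcases Nat.lt_or_ge m (n+1) with h | h
      · exact havoid m h1 (by omega)
      · have : m = n + 1 := by omega
        rw [this, hfn]
        exact hr
  have hmeas : MeasurableSet {f : ℕ → S | f θ = q ∧ ∀ m : ℕ, 1 ≤ m → m ≤ n → f m ≠ i} := by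
    have : {f : ℕ → S | f θ = q ∧ ∀ m : ℕ, 1 ≤ m → m ≤ n → f m ≠ i} =
        {f : ℕ → S | f θ = q} ∩ {f : ℕ → S | ∀ m : ℕ, 1 ≤ m → m ≤ n → f m ≠ i} := rfl
    rw [this]
    exact (measurableSet_coord θ q).inter (measurableSet_avoid i n)
  rw [hset, C.onestep i r n _ hmeas (fun f g hagree hf => by
    refine ⟨by rw [← hagree θ hn]; exact hf.1, fun m h1 hmn => by
      rw [← hagree m hmn]; exact hf.2 m h1 hmn⟩)]
  refine tsum_congr fun s => ?_
  have h1 : ({f : ℕ → S | f θ = q ∧ ∀ m : ℕ, 1 ≤ m → m ≤ n → f m ≠ i} ∩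
      {f : ℕ → S | f n = s}) = avoidAtQ i q θ n s := by
    ext f
    simp only [avoidAtQ, Set.mem_inter_iff, Set.mem_setOf_eq]
    try tauto
  rw [h1]

lemma avoidAtQ_split (C : Chain S) (i q : S) (θ : ℕ) (j : ℕ) (r : S) :
    C.μ i (avoidAtQ i q θ (θ+j) r) = C.μ i (retA i q θ) * C.μ q (avoidAt i j r) := by
  induction j generalizing r with
  | zero =>
    rw [show θ + 0 = θ from rfl, avoidAtQ_theta, avoidAt_zero, C.startProb q r]
    by_cases h : r = q
    · rw [if_pos h, if_pos h, mul_one]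
    · rw [if_neg h, if_neg h, mul_zero, measure_empty]
  | succ j ih =>
    by_cases hr : r = i
    · rw [hr]
      rw [show θ + (j+1) = (θ+j) + 1 from rfl, avoidAtQ_succ_i i q θ (θ+j) (by omega),
        avoidAt_succ_i, measure_empty, measure_empty, mul_zero]
    · rw [show θ + (j+1) = (θ+j) + 1 from rfl,
        C.measure_avoidAtQ_succ i q θ (θ+j) (by omega) hr,
        C.measure_avoidAt_succ q i j hr, ← ENNReal.tsum_mul_left]
      refine tsum_congr fun s => ?_
      rw [ih s, mul_assoc]

/-- The return-event splitting through time `θ`. -/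
lemma hitEq_inter_coord_split (C : Chain S) (i q : S) (θ : ℕ) (hθ : 1 ≤ θ) (j : ℕ) :
    C.μ i ({f | hit i f = ((θ+j+1 : ℕ) : ℕ∞)} ∩ {f | f θ = q}) =
      C.μ i (retA i q θ) * C.μ q {f | hit i f = ((j+1 : ℕ) : ℕ∞)} := by
  -- rewrite the hit events
  have hset1 : {f : ℕ → S | hit i f = ((θ+j+1 : ℕ) : ℕ∞)} ∩ {f : ℕ → S | f θ = q} =
      ({f : ℕ → S | f θ = q ∧ ∀ m : ℕ, 1 ≤ m → m ≤ θ+j → f m ≠ i} ∩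
        {f : ℕ → S | f (θ+j+1) = i}) := by
    ext f
    simp only [Set.mem_inter_iff, Set.mem_setOf_eq]
    rw [hit_eq_coe_iff (θ+j+1) (by omega)]
    constructor
    · rintro ⟨⟨hend, havoid⟩, hfq⟩
      exact ⟨⟨hfq, fun m h1 hm => havoid m h1 (by omega)⟩, hend⟩
    · rintro ⟨⟨hfq, havoid⟩, hend⟩
      exact ⟨⟨hend, fun m h1 hm => havoid m h1 (by omega)⟩, hfq⟩
  have hset2 : {f : ℕ → S | hit i f = ((j+1 : ℕ) : ℕ∞)} =
      ({f : ℕ → S | ∀ m : ℕ, 1 ≤ m → m ≤ j → f m ≠ i} ∩ {f : ℕ → S | f (j+1) = i}) := by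
    ext f
    simp only [Set.mem_inter_iff, Set.mem_setOf_eq]
    rw [hit_eq_coe_iff (j+1) (by omega)]
    constructor
    · rintro ⟨hend, havoid⟩
      exact ⟨fun m h1 hm => havoid m h1 (by omega), hend⟩
    · rintro ⟨havoid, hend⟩
      exact ⟨hend, fun m h1 hm => havoid m h1 (by omega)⟩
  have hmeasE : MeasurableSet {f : ℕ → S | f θ = q ∧ ∀ m : ℕ, 1 ≤ m → m ≤ θ+j → f m ≠ i} := by
    have : {f : ℕ → S | f θ = q ∧ ∀ m : ℕ, 1 ≤ m → m ≤ θ+j → f m ≠ i} =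
        {f : ℕ → S | f θ = q} ∩ {f : ℕ → S | ∀ m : ℕ, 1 ≤ m → m ≤ θ+j → f m ≠ i} := rfl
    rw [this]
    exact (measurableSet_coord θ q).inter (measurableSet_avoid i (θ+j))
  rw [hset1, hset2,
    C.onestep i i (θ+j) _ hmeasE (fun f g hagree hf => by
      refine ⟨by rw [← hagree θ (by omega)]; exact hf.1, fun m h1 hmn => by
        rw [← hagree m hmn]; exact hf.2 m h1 hmn⟩),
    C.onestep q i j _ (measurableSet_avoid i j) (fun f g hagree hf m h1 hmn => by
      rw [← hagree m hmn]; exact hf m h1 hmn), ← ENNReal.tsum_mul_left]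
  refine tsum_congr fun s => ?_
  have h1 : ({f : ℕ → S | f θ = q ∧ ∀ m : ℕ, 1 ≤ m → m ≤ θ+j → f m ≠ i} ∩
      {f : ℕ → S | f (θ+j) = s}) = avoidAtQ i q θ (θ+j) s := by
    ext f
    simp only [avoidAtQ, Set.mem_inter_iff, Set.mem_setOf_eq]
    try tauto
  have h2 : ({f : ℕ → S | ∀ m : ℕ, 1 ≤ m → m ≤ j → f m ≠ i} ∩ {f : ℕ → S | f j = s}) =
      avoidAt i j s := by
    ext f
    simp only [avoidAt, Set.mem_inter_iff, Set.mem_setOf_eq]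
    try tauto
  rw [h1, h2]
  try rw [C.avoidAtQ_split i q θ j s]
  try rw [mul_assoc]

end Chain

/-! ### Integration lemmas -/

section Integration

variable {S : Type*} [MeasurableSpace S] [MeasurableSingletonClass S] [Countable S]

lemma lintegral_nat_eq {α : Type*} [MeasurableSpace α] (μ : Measure α) {g : α → ℕ}
    (hg : Measurable g) :
    ∫⁻ a, (g a : ℝ≥0∞) ∂μ = ∑' n : ℕ, (n : ℝ≥0∞) * μ {a | g a = n} := by
  have hpt : ∀ a, (g a : ℝ≥0∞) =
      ∑' n : ℕ, Set.indicator {b | g b = n} (fun _ => (n : ℝ≥0∞)) a := by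
    intro a
    have hne : ∀ n : ℕ, n ≠ g a →
        Set.indicator {b | g b = n} (fun _ => (n : ℝ≥0∞)) a = 0 := by
      intro n hn
      exact Set.indicator_of_notMem (fun h => hn ((show g a = n from h).symm)) _
    rw [tsum_eq_single (g a) hne,
      Set.indicator_of_mem (show a ∈ {b | g b = g a} from rfl) _]
  calc ∫⁻ a, (g a : ℝ≥0∞) ∂μ
      = ∫⁻ a, ∑' n : ℕ, Set.indicator {b | g b = n} (fun _ => (n : ℝ≥0∞)) a ∂μ :=
        lintegral_congr hpt
    _ = ∑' n : ℕ, ∫⁻ a, Set.indicator {b | g b = n} (fun _ => (n : ℝ≥0∞)) a ∂μ :=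
        lintegral_tsum (fun n => (measurable_const.indicator
          (hg (measurableSet_singleton n))).aemeasurable)
    _ = ∑' n : ℕ, (n : ℝ≥0∞) * μ {a | g a = n} := by
        refine tsum_congr fun n => ?_
        exact lintegral_indicator_const (hg (measurableSet_singleton n)) _

lemma toNat_eq_pos_iff (a : ℕ∞) (m : ℕ) (hm : 1 ≤ m) : a.toNat = m ↔ a = (m : ℕ∞) := by
  rcases eq_or_ne a ⊤ with h | h
  · subst h
    simp only [ENat.toNat_top]
    constructor
    · intro h; omega
    · intro h; exact absurd h.symm (ENat.coe_ne_top m)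
  · exact toNat_eq_iff_of_ne_top h m

namespace Chain

lemma lint_hitToNat (C : Chain S) (x i : S) :
    ∫⁻ f, ((hit i f).toNat : ℝ≥0∞) ∂ C.μ x =
      ∑' m : ℕ, (m : ℝ≥0∞) * C.μ x {f | hit i f = (m : ℕ∞)} := by
  rw [lintegral_nat_eq _ (measurable_hitToNat i)]
  refine tsum_congr fun m => ?_
  rcases Nat.eq_zero_or_pos m with h0 | h0
  · subst h0; simp
  · have hset : {f : ℕ → S | (hit i f).toNat = m} = {f : ℕ → S | hit i f = (m : ℕ∞)} := by
      ext f
      simp only [Set.mem_setOf_eq]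
      exact toNat_eq_pos_iff _ m h0
    rw [hset]

lemma measurable_D (i : S) (θ : ℕ) (hθ : 1 ≤ θ) :
    Measurable (fun f : ℕ → S => (hit i f).toNat - truncHit i θ f) :=
  (measurable_hitToNat i).sub (measurable_truncHit i θ hθ)

/-- The key identity `E_i[T_i] = E_i[min(T_i,θ)] + ∑_q P_i(X_θ = q, T_i > θ) E_q[T_i]`
at the level of `ℝ≥0∞`-valued Lebesgue integrals. -/
lemma key_identity (C : Chain S) (i : S) (θ : ℕ) (hθ : 1 ≤ θ)
    (htop : C.μ i {f | hit i f = ⊤} = 0) :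
    ∫⁻ f, ((hit i f).toNat : ℝ≥0∞) ∂ C.μ i =
      (∫⁻ f, (truncHit i θ f : ℝ≥0∞) ∂ C.μ i) +
        ∑' q : S, C.μ i (retA i q θ) * ∫⁻ f, ((hit i f).toNat : ℝ≥0∞) ∂ C.μ q := by
  have hae : ∀ᵐ f ∂ C.μ i, hit i f ≠ ⊤ := by
    rw [ae_iff]
    simpa using htop
  -- pointwise decomposition a.e.
  have h1 : ∀ᵐ f ∂ C.μ i, ((hit i f).toNat : ℝ≥0∞) =
      (truncHit i θ f : ℝ≥0∞) + (((hit i f).toNat - truncHit i θ f : ℕ) : ℝ≥0∞) := by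
    filter_upwards [hae] with f hf
    rw [truncHit_of_ne_top θ hf]
    have hle : min (hit i f).toNat θ ≤ (hit i f).toNat := min_le_left _ _
    rw [← Nat.cast_add]
    congr 1
    omega
  have hmeas : Measurable (fun f : ℕ → S => ((truncHit i θ f : ℕ) : ℝ≥0∞)) :=
    measurable_from_top.comp (measurable_truncHit i θ hθ)
  rw [lintegral_congr_ae h1, lintegral_add_left hmeas]
  congr 1
  -- compute the remainder integral
  rw [lintegral_nat_eq _ (Chain.measurable_D i θ hθ)]
  have hDset : ∀ m : ℕ, 1 ≤ m →
      {f : ℕ → S | (hit i f).toNat - truncHit i θ f = m} =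
        {f : ℕ → S | hit i f = ((θ + m : ℕ) : ℕ∞)} := by
    intro m hm
    ext f
    simp only [Set.mem_setOf_eq]
    rcases eq_or_ne (hit i f) ⊤ with h | h
    · rw [h]
      have htr : truncHit i θ f = θ := by
        rw [truncHit_eq_iff, h, min_eq_right (le_top : (θ:ℕ∞) ≤ ⊤)]
      constructor
      · intro hc; rw [htr] at hc; simp at hc; omega
      · intro hc; exact absurd hc.symm (ENat.coe_ne_top _)
    · rw [truncHit_of_ne_top θ h, ← toNat_eq_pos_iff (hit i f) (θ+m) (by omega)]
      set n := (hit i f).toNat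
      constructor
      · intro hc
        omega
      · intro hc
        omega
  have hterm : ∀ m : ℕ,
      (m : ℝ≥0∞) * C.μ i {f : ℕ → S | (hit i f).toNat - truncHit i θ f = m} =
        (m : ℝ≥0∞) * ∑' q : S, C.μ i (retA i q θ) * C.μ q {f | hit i f = (m : ℕ∞)} := by
    intro m
    rcases Nat.eq_zero_or_pos m with h0 | h0
    · subst h0; simp
    · obtain ⟨j, rfl⟩ : ∃ j, m = j + 1 := ⟨m - 1, by omega⟩
      rw [hDset (j+1) h0, show θ + (j + 1) = θ + j + 1 from rfl,
        measure_eq_tsum_coord (C.μ i) (measurableSet_hitEq i (θ+j+1) (by omega)) θ]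
      · congr 1
        refine tsum_congr fun q => ?_
        exact C.hitEq_inter_coord_split i q θ hθ j
  rw [tsum_congr hterm]
  -- exchange the sums
  calc ∑' m : ℕ, (m : ℝ≥0∞) * ∑' q : S, C.μ i (retA i q θ) * C.μ q {f | hit i f = (m : ℕ∞)}
      = ∑' m : ℕ, ∑' q : S, C.μ i (retA i q θ) * ((m : ℝ≥0∞) * C.μ q {f | hit i f = (m : ℕ∞)}) := by
        refine tsum_congr fun m => ?_
        rw [← ENNReal.tsum_mul_left]
        refine tsum_congr fun q => ?_
        ring
    _ = ∑' q : S, ∑' m : ℕ, C.μ i (retA i q θ) * ((m : ℝ≥0∞) * C.μ q {f | hit i f = (m : ℕ∞)}) :=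
        ENNReal.tsum_comm
    _ = ∑' q : S, C.μ i (retA i q θ) * ∫⁻ f, ((hit i f).toNat : ℝ≥0∞) ∂ C.μ q := by
        refine tsum_congr fun q => ?_
        rw [ENNReal.tsum_mul_left, C.lint_hitToNat q i]

end Chain

end Integration

namespace Chain

variable {S : Type*} [MeasurableSpace S] [MeasurableSingletonClass S] [Countable S]

lemma ERet_eq_toReal (C : Chain S) (x i : S) :
    C.ERet x i = (∫⁻ f, ((hit i f).toNat : ℝ≥0∞) ∂ C.μ x).toReal := by
  have hmeas : Measurable (fun f : ℕ → S => (((hit i f).toNat : ℕ) : ℝ)) :=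
    measurable_from_top.comp (measurable_hitToNat i)
  rw [ERet, integral_eq_lintegral_of_nonneg_ae
    (Filter.Eventually.of_forall fun f => by positivity) hmeas.aestronglyMeasurable]
  congr 1
  exact lintegral_congr fun f => ENNReal.ofReal_natCast _

lemma EThat_eq_toReal (C : Chain S) (i : S) (θ : ℕ) (hθ : 1 ≤ θ) :
    C.EThat i θ = (∫⁻ f, (truncHit i θ f : ℝ≥0∞) ∂ C.μ i).toReal := by
  have hmeas : Measurable (fun f : ℕ → S => ((truncHit i θ f : ℕ) : ℝ)) :=
    measurable_from_top.comp (measurable_truncHit i θ hθ)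
  rw [EThat, integral_eq_lintegral_of_nonneg_ae
    (Filter.Eventually.of_forall fun f => by positivity) hmeas.aestronglyMeasurable]
  congr 1
  exact lintegral_congr fun f => ENNReal.ofReal_natCast _

end Chain


open Chain in
/-- Lemma 11 of the paper, rewritten via `Z_ii − Z_qi = π_i E_q[T_i]`.
With `Ê = E_i[min(T_i, θ)]`,
`(1 − P_i(T_i > θ))/Ê − π_i = (1/Ê)·(π_i · Σ_{q ≠ i} P_i(X_θ = q, T_i > θ) E_q[T_i] − P_i(T_i > θ))`. -/
theorem statement7 {S : Type*} [MeasurableSpace S] [MeasurableSingletonClass S] [Countable S]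
    (C : Chain S) (hirr : C.Irreducible) (hrec : C.PositiveRecurrent)
    (i : S) (θ : ℕ) (hθ : 1 ≤ θ) :
    (1 - C.tailP i θ) / C.EThat i θ - C.statPi i =
      (C.EThat i θ)⁻¹ *
        (C.statPi i *
            ∑' q : {q : S // q ≠ i},
              (C.μ i {f | f θ = (q : S) ∧ (θ : ℕ∞) < hit i f}).toReal * C.ERet (q : S) i -
          C.tailP i θ) := by
  classical
  haveI := C.isProb i
  obtain ⟨htop, hint⟩ := hrec i
  set EE : ℝ≥0∞ := ∫⁻ f, ((hit i f).toNat : ℝ≥0∞) ∂ C.μ i with hEdef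
  set TT : ℝ≥0∞ := ∫⁻ f, (truncHit i θ f : ℝ≥0∞) ∂ C.μ i with hTdef
  have hkey := C.key_identity i θ hθ htop
  rw [← hEdef, ← hTdef] at hkey
  have hae : ∀ᵐ f ∂ C.μ i, hit i f ≠ ⊤ := by
    rw [ae_iff]
    simpa using htop
  -- finiteness facts
  have hEfin : EE ≠ ⊤ := by
    have hcongr : EE = ∫⁻ f, (‖(((hit i f).toNat : ℕ) : ℝ)‖₊ : ℝ≥0∞) ∂ C.μ i :=
      lintegral_congr fun f => by simp
    rw [hcongr]
    exact hint.2.ne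
  have hTfin : TT ≠ ⊤ := by
    have hle : TT ≤ (θ : ℝ≥0∞) := by
      calc TT ≤ ∫⁻ _, (θ : ℝ≥0∞) ∂ C.μ i :=
            lintegral_mono fun f => by exact (Nat.cast_le (α := ℝ≥0∞)).2 (truncHit_le (i := i) (f := f) θ)
        _ = (θ : ℝ≥0∞) := by rw [lintegral_const, measure_univ, mul_one]
    exact ne_top_of_le_ne_top (ENNReal.natCast_ne_top θ) hle
  have hSfin : (∑' q : S, C.μ i (retA i q θ) *
      ∫⁻ f, ((hit i f).toNat : ℝ≥0∞) ∂ C.μ q) ≠ ⊤ := by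
    intro hc
    exact hEfin (by rw [hkey, hc, add_top])
  have hT1 : (1 : ℝ≥0∞) ≤ TT := by
    calc (1 : ℝ≥0∞) = ∫⁻ _, (1 : ℝ≥0∞) ∂ C.μ i := by rw [lintegral_one, measure_univ]
      _ ≤ TT := lintegral_mono fun f => by exact (Nat.one_le_cast (α := ℝ≥0∞)).2 (one_le_truncHit (i := i) (f := f) θ hθ)
  have hE1 : (1 : ℝ≥0∞) ≤ EE := by
    have hmono : ∀ᵐ f ∂ C.μ i, (1 : ℝ≥0∞) ≤ ((hit i f).toNat : ℝ≥0∞) := by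
      filter_upwards [hae] with f hf
      have h1 : 1 ≤ (hit i f).toNat := by
        rcases Nat.eq_zero_or_pos (hit i f).toNat with h0 | h0
        · exfalso
          rcases ENat.toNat_eq_zero.1 h0 with h | h
          · exact hit_ne_zero h
          · exact hf h
        · omega
      exact_mod_cast h1
    calc (1 : ℝ≥0∞) = ∫⁻ _, (1 : ℝ≥0∞) ∂ C.μ i := by rw [lintegral_one, measure_univ]
      _ ≤ EE := lintegral_mono_ae hmono
  -- real-valued versions
  have hER : C.ERet i i = EE.toReal := C.ERet_eq_toReal i i
  have hET : C.EThat i θ = TT.toReal := C.EThat_eq_toReal i θ hθ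
  have hT1r : (1 : ℝ) ≤ TT.toReal := by
    have := ENNReal.toReal_mono hTfin hT1
    simpa using this
  have hE1r : (1 : ℝ) ≤ EE.toReal := by
    have := ENNReal.toReal_mono hEfin hE1
    simpa using this
  have htsum_ne_top := ENNReal.ne_top_of_tsum_ne_top hSfin
  have hKreal : EE.toReal = TT.toReal +
      ∑' q : S, (C.μ i (retA i q θ)).toReal * C.ERet q i := by
    rw [hkey, ENNReal.toReal_add hTfin hSfin, ENNReal.tsum_toReal_eq htsum_ne_top]
    congr 1
    refine tsum_congr fun q => ?_
    rw [ENNReal.toReal_mul, C.ERet_eq_toReal q i]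
  -- translate the event
  have hsetA : ∀ q : S, {f : ℕ → S | f θ = q ∧ (θ : ℕ∞) < hit i f} = retA i q θ := by
    intro q
    ext f
    simp only [retA, Set.mem_setOf_eq]
    constructor
    · rintro ⟨h1, h2⟩
      exact ⟨h1, (lt_hit_iff θ).1 h2⟩
    · rintro ⟨h1, h2⟩
      exact ⟨h1, (lt_hit_iff θ).2 h2⟩
  have hAi : (C.μ i (retA i i θ)).toReal * C.ERet i i = 0 := by
    have hempty : retA i i θ = ∅ := by
      ext f
      simp only [retA, Set.mem_setOf_eq, Set.mem_empty_iff_false, iff_false, not_and]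
      intro hq hav
      exact hav θ hθ le_rfl hq
    rw [hempty, measure_empty]
    simp
  -- subtype sum equals full sum
  have hsub : (∑' q : {q : S // q ≠ i},
        (C.μ i {f | f θ = (q : S) ∧ (θ : ℕ∞) < hit i f}).toReal * C.ERet (q : S) i) =
      ∑' q : S, (C.μ i (retA i q θ)).toReal * C.ERet q i := by
    have h1 : ∀ q : {q : S // q ≠ i},
        (C.μ i {f | f θ = (q : S) ∧ (θ : ℕ∞) < hit i f}).toReal * C.ERet (q : S) i =
          (C.μ i (retA i (q : S) θ)).toReal * C.ERet (q : S) i := by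
      intro q
      rw [hsetA (q : S)]
    rw [tsum_congr h1]
    have h2 := tsum_subtype {q : S | q ≠ i}
      (fun q => (C.μ i (retA i q θ)).toReal * C.ERet q i)
    refine h2.trans (tsum_congr fun q => ?_)
    by_cases hq : q = i
    · rw [hq, Set.indicator_of_notMem (by simp : i ∉ {q : S | q ≠ i})]
      exact hAi.symm
    · rw [Set.indicator_of_mem (by simpa using hq : q ∈ {q : S | q ≠ i})]
  rw [hsub]
  have hSig : (∑' q : S, (C.μ i (retA i q θ)).toReal * C.ERet q i) =
      C.ERet i i - C.EThat i θ := by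
    rw [hER, hET]
    linarith [hKreal]
  rw [hSig, Chain.statPi]
  have hEpos : (0 : ℝ) < C.ERet i i := by rw [hER]; linarith
  have hTpos : (0 : ℝ) < C.EThat i θ := by rw [hET]; linarith
  field_simp
  ring


end

end LocalStationary
end

section
/- With probability at least 1 − α, for every iteration t one has π̂_i^{(t)} ≥ π_i/(1+ε); consequently, on this event, if the algorithm terminates at condition (a) (i.e., π̂_i^{(t)} < Δ/(1+ε)) and outputs 0, then indeed π_i < Δ, and equivalently if π_i ≥ Δ the algorithm terminates at condition (b) and outputs 1. -/
open MeasureTheory ProbabilityTheory Finset Set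
open scoped ENNReal NNReal Classical

namespace LocalStationary

noncomputable section

/-- The randomness of the local algorithm with anchor node `i` and parameters `ε`, `α`,
run on the chain `C`: a probability space carrying, for every iteration `t` and sample
index `k`, an independent sample trajectory `path t k` of the chain started at `i`,
together with the sample numbers `N^{(t)}`, empirical truncated return times `T̂^{(t)}`
and truncated fractions `p̂^{(t)}`, with `θ^{(t)} = 2^t`. -/
structure Algo {S : Type*} [MeasurableSpace S] (C : Chain S) (i : S) (ε α : ℝ)
    (Ω : Type*) [MeasurableSpace Ω] where
  vol : Measure Ω
  isProb : IsProbabilityMeasure vol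
  path : ℕ → ℕ → Ω → (ℕ → S)
  meas_path : ∀ t k, Measurable (path t k)
  law_path : ∀ t k, vol.map (path t k) = C.μ i
  indep_path : iIndepFun (fun p : ℕ × ℕ => path p.1 p.2) vol
  Nsamp : ℕ → Ω → ℕ
  That : ℕ → Ω → ℝ
  phat : ℕ → Ω → ℝ
  hThat : ∀ t ω, That t ω =
    (Nsamp t ω : ℝ)⁻¹ * ∑ k ∈ Finset.range (Nsamp t ω), (truncHit i (2 ^ t) (path t k ω) : ℝ)
  hphat : ∀ t ω, phat t ω = (Nsamp t ω : ℝ)⁻¹ *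
    ∑ k ∈ Finset.range (Nsamp t ω),
      (if ((2 ^ t : ℕ) : ℕ∞) < hit i (path t k ω) then (1 : ℝ) else 0)
  hN1 : ∀ ω, Nsamp 1 ω = ⌈6 * (1 + ε) * Real.log (8 / α) / ε ^ 2⌉₊
  hNsucc : ∀ t ω, 1 ≤ t → Nsamp (t + 1) ω =
    ⌈3 * (1 + ε) * (2 ^ (t + 1) : ℝ) * Real.log (4 * (2 ^ (t + 1) : ℝ) / α) /
      (That t ω * ε ^ 2)⌉₊

namespace Algo

variable {S : Type*} [MeasurableSpace S] {C : Chain S} {i : S} {ε α : ℝ}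
  {Ω : Type*} [MeasurableSpace Ω]

/-- The estimate `F̂_j^{(t)}` of the visit frequency to an observer node `j`. -/
def Fhat (A : Algo C i ε α Ω) (j : S) (t : ℕ) (ω : Ω) : ℝ :=
  (A.Nsamp t ω : ℝ)⁻¹ *
    ∑ k ∈ Finset.range (A.Nsamp t ω), (visits i j (2 ^ t) (A.path t k ω) : ℝ)

/-- Termination condition at iteration `t`: (a) `π̂^{(t)} < Δ/(1+ε)`, or
(b) `p̂^{(t)} π̂^{(t)} < εΔ`, where `π̂^{(t)} = 1/T̂^{(t)}`. -/
def stops (A : Algo C i ε α Ω) (Δ : ℝ) (t : ℕ) (ω : Ω) : Prop :=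
  (A.That t ω)⁻¹ < Δ / (1 + ε) ∨ A.phat t ω * (A.That t ω)⁻¹ < ε * Δ

/-- The terminal iteration `t_max` of the algorithm. -/
def tmax (A : Algo C i ε α Ω) (Δ : ℝ) (ω : Ω) : ℕ :=
  sInf {t : ℕ | 1 ≤ t ∧ A.stops Δ t ω}

end Algo


section AuxAnalytic

open Real

lemma aux_hasDeriv (y : ℝ) (hy : y ∈ Set.Ici (0:ℝ)) :
    HasDerivAt (fun z : ℝ => Real.log (1+z) - 2*z/(2+z))
      (1/(1+y) - 4/(2+y)^2) y := by
  have h1 : (0:ℝ) < 1 + y := by simp only [Set.mem_Ici] at hy; linarith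
  have h2 : (0:ℝ) < 2 + y := by simp only [Set.mem_Ici] at hy; linarith
  have hlog : HasDerivAt (fun z : ℝ => Real.log (1+z)) (1/(1+y)) y := by
    have := (Real.hasDerivAt_log h1.ne').comp y ((hasDerivAt_id y).const_add 1)
    simpa [one_div, Function.comp_def] using this
  have hq : HasDerivAt (fun z : ℝ => 2*z/(2+z)) (4/(2+y)^2) y := by
    have hnum : HasDerivAt (fun z : ℝ => 2*z) 2 y := by
      simpa using (hasDerivAt_id y).const_mul 2
    have hden : HasDerivAt (fun z : ℝ => 2+z) 1 y := (hasDerivAt_id y).const_add 2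
    have := hnum.div hden h2.ne'
    rw [show (4:ℝ)/(2+y)^2 = (2 * (2+y) - 2*y*1)/(2+y)^2 by ring]
    exact this
  exact hlog.sub hq

lemma aux_log_lb {x : ℝ} (hx : 0 ≤ x) : 2*x/(2+x) ≤ Real.log (1+x) := by
  have hmono : MonotoneOn (fun z : ℝ => Real.log (1+z) - 2*z/(2+z)) (Set.Ici 0) := by
    apply monotoneOn_of_hasDerivWithinAt_nonneg (convex_Ici 0)
      (f' := fun y => 1/(1+y) - 4/(2+y)^2)
    · intro z hz
      exact (aux_hasDeriv z hz).continuousAt.continuousWithinAt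
    · intro z hz
      rw [interior_Ici, Set.mem_Ioi] at hz
      exact (aux_hasDeriv z (Set.mem_Ici.mpr (le_of_lt hz))).hasDerivWithinAt
    · intro z hz
      rw [interior_Ici, Set.mem_Ioi] at hz
      have h1 : (0:ℝ) < 1 + z := by linarith [hz.le]
      have h2 : (0:ℝ) < 2 + z := by linarith [hz.le]
      rw [sub_nonneg, div_le_div_iff₀ (by positivity) h1]
      nlinarith [sq_nonneg z]
  have h0 : (fun z : ℝ => Real.log (1+z) - 2*z/(2+z)) 0 = 0 := by norm_num
  have := hmono (Set.self_mem_Ici) (hx) hx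
  rw [h0] at this
  linarith [this]

lemma aux_key {ε : ℝ} (h0 : 0 < ε) (h1 : ε ≤ 1) :
    ε + ε^2/3 ≤ (1+ε) * Real.log (1+ε) := by
  have hlb := aux_log_lb h0.le
  have h2 : (0:ℝ) < 2 + ε := by linarith
  have hmul : (1+ε) * (2*ε/(2+ε)) ≤ (1+ε) * Real.log (1+ε) :=
    mul_le_mul_of_nonneg_left hlb (by linarith)
  refine le_trans ?_ hmul
  rw [← sub_nonneg]
  have heq : (1+ε) * (2*ε/(2+ε)) - (ε + ε^2/3) = ε^2*(1-ε)/(3*(2+ε)) := by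
    field_simp
    ring
  rw [heq]
  exact div_nonneg (mul_nonneg (sq_nonneg _) (by linarith)) (by linarith)

lemma aux_exp_convex {y θ lam : ℝ} (hy0 : 0 ≤ y) (hyθ : y ≤ θ) (hθ : 0 < θ) (hlam : 0 ≤ lam) :
    Real.exp (lam * y) ≤ 1 + (y/θ)*(Real.exp (lam*θ) - 1) := by
  have hb : 0 ≤ y/θ := by positivity
  have ha : 0 ≤ 1 - y/θ := by
    rw [sub_nonneg, div_le_one hθ]; exact hyθ
  have hcx := convexOn_exp.2 (Set.mem_univ (0:ℝ)) (Set.mem_univ (lam*θ)) ha hb (by ring)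
  simp only [smul_eq_mul, mul_zero, zero_add, Real.exp_zero] at hcx
  have harg : y/θ * (lam*θ) = lam * y := by field_simp
  rw [harg] at hcx
  calc Real.exp (lam*y) ≤ (1 - y/θ)*1 + y/θ * Real.exp (lam*θ) := hcx
    _ = 1 + (y/θ)*(Real.exp (lam*θ) - 1) := by ring

end AuxAnalytic

section AuxHit

variable {S : Type*} {i : S} {f g : ℕ → S} {θ : ℕ}

lemma aux_min_hit_of_exists (h : ∃ m, 1 ≤ m ∧ m ≤ θ ∧ f m = i) :
    min (hit i f) (θ : ℕ∞) = (Nat.find h : ℕ∞) := by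
  obtain ⟨h1, h2, h3⟩ := Nat.find_spec h
  have hle : hit i f ≤ (Nat.find h : ℕ∞) := sInf_le ⟨Nat.find h, rfl, h1, h3⟩
  have hge : (Nat.find h : ℕ∞) ≤ hit i f := by
    apply le_sInf
    rintro n ⟨m, rfl, hm1, hmf⟩
    by_cases hmθ : m ≤ θ
    · exact_mod_cast Nat.find_min' h ⟨hm1, hmθ, hmf⟩
    · calc (Nat.find h : ℕ∞) ≤ (θ : ℕ∞) := by exact_mod_cast h2
        _ ≤ (m : ℕ∞) := by exact_mod_cast le_of_not_ge hmθ
  have heq : hit i f = (Nat.find h : ℕ∞) := le_antisymm hle hge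
  rw [heq, min_eq_left (by exact_mod_cast h2)]

lemma aux_min_hit_of_not (h : ¬ ∃ m, 1 ≤ m ∧ m ≤ θ ∧ f m = i) :
    min (hit i f) (θ : ℕ∞) = (θ : ℕ∞) := by
  rw [min_eq_right]
  apply le_sInf
  rintro n ⟨m, rfl, hm1, hmf⟩
  have hθm : θ < m := by
    by_contra hc
    exact h ⟨m, hm1, le_of_not_gt hc, hmf⟩
  exact_mod_cast hθm.le

lemma aux_truncHit_congr (hfg : ∀ k ≤ θ, f k = g k) : truncHit i θ f = truncHit i θ g := by
  unfold truncHit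
  by_cases h : ∃ m, 1 ≤ m ∧ m ≤ θ ∧ f m = i
  · have h' : ∃ m, 1 ≤ m ∧ m ≤ θ ∧ g m = i := by
      obtain ⟨m, hm1, hm2, hm3⟩ := h
      exact ⟨m, hm1, hm2, (hfg m hm2) ▸ hm3⟩
    rw [aux_min_hit_of_exists h, aux_min_hit_of_exists h']
    have hfind : Nat.find h = Nat.find h' := by
      apply le_antisymm
      · obtain ⟨h1, h2, h3⟩ := Nat.find_spec h'
        exact Nat.find_min' h ⟨h1, h2, (hfg _ h2) ▸ h3⟩
      · obtain ⟨h1, h2, h3⟩ := Nat.find_spec h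
        exact Nat.find_min' h' ⟨h1, h2, (hfg _ h2) ▸ h3⟩
    rw [hfind]
  · have h' : ¬ ∃ m, 1 ≤ m ∧ m ≤ θ ∧ g m = i := by
      rintro ⟨m, hm1, hm2, hm3⟩
      exact h ⟨m, hm1, hm2, (hfg m hm2) ▸ hm3⟩
    rw [aux_min_hit_of_not h, aux_min_hit_of_not h']

lemma aux_truncHit_le : truncHit i θ f ≤ θ := by
  unfold truncHit
  by_cases h : ∃ m, 1 ≤ m ∧ m ≤ θ ∧ f m = i
  · rw [aux_min_hit_of_exists h]
    simpa using (Nat.find_spec h).2.1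
  · rw [aux_min_hit_of_not h]; simp

lemma aux_one_le_truncHit (hθ : 1 ≤ θ) : 1 ≤ truncHit i θ f := by
  unfold truncHit
  by_cases h : ∃ m, 1 ≤ m ∧ m ≤ θ ∧ f m = i
  · rw [aux_min_hit_of_exists h]
    simpa using (Nat.find_spec h).1
  · rw [aux_min_hit_of_not h]; simp [hθ]

lemma aux_truncHit_le_toNat_hit (h : hit i f ≠ ⊤) : truncHit i θ f ≤ (hit i f).toNat := by
  unfold truncHit
  exact ENat.toNat_le_toNat (min_le_left _ _) h

lemma aux_measurable_truncHit [MeasurableSpace S] [MeasurableSingletonClass S] [Countable S] :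
    Measurable (truncHit i θ) := by
  have hfac : truncHit i θ = (fun v : Fin (θ+1) → S =>
      truncHit i θ (fun n => if h : n < θ + 1 then v ⟨n, h⟩ else i)) ∘
      (fun f (k : Fin (θ+1)) => f (k : ℕ)) := by
    funext f
    apply aux_truncHit_congr
    intro k hk
    simp [Nat.lt_succ_of_le hk]
  rw [hfac]
  exact (measurable_of_countable _).comp (measurable_pi_lambda _ fun k => measurable_pi_apply _)

end AuxHit

section AuxMeas

lemma aux_measurable_nat_piece {Ω γ : Type*} {m0 : MeasurableSpace Ω} [MeasurableSpace γ]
    {N : Ω → ℕ} (hN : Measurable[m0] N) {h : ℕ → Ω → γ}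
    (hh : ∀ n, Measurable[m0] (h n)) : Measurable[m0] (fun ω => h (N ω) ω) := by
  intro s hs
  have heq : (fun ω => h (N ω) ω) ⁻¹' s = ⋃ n, (N ⁻¹' {n} ∩ h n ⁻¹' s) := by
    ext ω
    simp only [Set.mem_preimage, Set.mem_iUnion, Set.mem_inter_iff, Set.mem_singleton_iff]
    exact ⟨fun hx => ⟨N ω, rfl, hx⟩, by rintro ⟨n, rfl, hx⟩; exact hx⟩
  rw [heq]
  exact MeasurableSet.iUnion fun n => (hN (measurableSet_singleton n)).inter (hh n hs)

lemma aux_measurable_natCeil : Measurable (fun x : ℝ => ⌈x⌉₊) := by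
  apply measurable_to_countable'
  intro n
  rcases Nat.eq_zero_or_pos n with h0 | hpos
  · subst h0
    have heq : (fun x : ℝ => ⌈x⌉₊) ⁻¹' {0} = Set.Iic 0 := by
      ext x; simp [Nat.ceil_eq_zero]
    rw [heq]; exact measurableSet_Iic
  · have heq : (fun x : ℝ => ⌈x⌉₊) ⁻¹' {n} = Set.Ioc ((n-1 : ℕ) : ℝ) (n : ℝ) := by
      ext x
      simp only [Set.mem_preimage, Set.mem_singleton_iff, Set.mem_Ioc]
      rw [Nat.ceil_eq_iff hpos.ne']
    rw [heq]; exact measurableSet_Ioc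

lemma aux_iIndepFun_precomp {Ω ι κ E : Type*} [MeasurableSpace Ω] {μ : MeasureTheory.Measure Ω}
    [MeasurableSpace E] {f : κ → Ω → E}
    (hf : iIndepFun f μ) (u : ι → κ) (hu : Function.Injective u) :
    iIndepFun (fun i => f (u i)) μ := by
  classical
  rw [iIndepFun_iff_measure_inter_preimage_eq_mul] at hf ⊢
  intro S sets hsets
  set sets' : κ → Set E := fun j =>
    if h : ∃ i ∈ S, u i = j then sets h.choose else Set.univ with hsets'def
  have hkey : ∀ i ∈ S, sets' (u i) = sets i := by
    intro i hi
    have hex : ∃ i' ∈ S, u i' = u i := ⟨i, hi, rfl⟩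
    have hch : hex.choose = i := hu hex.choose_spec.2
    simp only [hsets'def, dif_pos hex, hch]
  have hmeas' : ∀ j, j ∈ S.image u → MeasurableSet (sets' j) := by
    intro j hj
    simp only [hsets'def]
    split_ifs with h
    · exact hsets _ h.choose_spec.1
    · exact MeasurableSet.univ
  have hmain := hf (S.image u) hmeas'
  have h1 : (⋂ j ∈ S.image u, f j ⁻¹' sets' j) = ⋂ i ∈ S, f (u i) ⁻¹' sets i := by
    ext ω
    simp only [Set.mem_iInter, Finset.mem_image]
    constructor
    · intro hx i hi
      have := hx (u i) ⟨i, hi, rfl⟩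
      rwa [hkey i hi] at this
    · rintro hx j ⟨i, hi, rfl⟩
      rw [hkey i hi]
      exact hx i hi
  have h2 : ∏ j ∈ S.image u, μ (f j ⁻¹' sets' j) = ∏ i ∈ S, μ (f (u i) ⁻¹' sets i) := by
    rw [Finset.prod_image (fun a _ b _ h => hu h)]
    exact Finset.prod_congr rfl fun i hi => by rw [hkey i hi]
  rw [h1, h2] at hmain
  exact hmain

end AuxMeas

section AuxIndep

lemma aux_indep_piece {Ω E : Type*} [mΩ : MeasurableSpace Ω] [mE : MeasurableSpace E]
    {V : MeasureTheory.Measure Ω} {f : ℕ × ℕ → Ω → E}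
    (hmeas : ∀ q, Measurable (f q))
    (hindep : iIndepFun f V)
    (t : ℕ) (s1 s2 : Set Ω)
    (h1 : MeasurableSet[⨆ q ∈ {q : ℕ × ℕ | q.1 ≤ t}, MeasurableSpace.comap (f q) mE] s1)
    (h2 : MeasurableSet[⨆ q ∈ {q : ℕ × ℕ | q.1 = t + 1}, MeasurableSpace.comap (f q) mE] s2) :
    V (s1 ∩ s2) = V s1 * V s2 := by
  have hce : ∀ q : ℕ × ℕ, MeasurableSpace.comap (f q) mE ≤ mΩ := fun q => (hmeas q).comap_le
  have hdisj : Disjoint {q : ℕ × ℕ | q.1 ≤ t} {q : ℕ × ℕ | q.1 = t + 1} := by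
    rw [Set.disjoint_left]
    intro q hq1 hq2
    simp only [Set.mem_setOf_eq] at hq1 hq2
    omega
  have hI := indep_iSup_of_disjoint hce ((iIndepFun_iff_iIndep _ _ _).mp hindep) hdisj
  exact ((ProbabilityTheory.Indep_iff _ _ _).mp hI) s1 s2 h1 h2

end AuxIndep

section AuxMain

variable {Ω S : Type*} [MeasurableSpace S] [MeasurableSingletonClass S] [Countable S]

lemma aux_ERet_one (C : Chain S) (i : S) (hrec : C.PositiveRecurrent) : 1 ≤ C.ERet i i := by
  haveI := C.isProb i
  have hae : ∀ᵐ f ∂(C.μ i), (1:ℝ) ≤ ((hit i f).toNat : ℝ) := by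
    have h0 : ∀ᵐ f ∂(C.μ i), ¬ (hit i f = ⊤) := by
      rw [MeasureTheory.ae_iff]
      simpa using (hrec i).1
    filter_upwards [h0] with f hf
    have h1 : 1 ≤ hit i f := by
      apply le_sInf
      rintro n ⟨m, rfl, hm1, _⟩
      exact_mod_cast hm1
    lift (hit i f) to ℕ using hf with n hn
    rw [ENat.toNat_coe]
    exact_mod_cast h1
  calc (1:ℝ) = ∫ _, (1:ℝ) ∂(C.μ i) := by simp
    _ ≤ ∫ f, ((hit i f).toNat : ℝ) ∂(C.μ i) :=
        integral_mono_ae (integrable_const 1) (hrec i).2 hae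

lemma aux_meas_NT (m0 : MeasurableSpace Ω) (i : S) (ε α : ℝ)
    (p : ℕ → ℕ → Ω → ℕ → S) (N : ℕ → Ω → ℕ) (Th : ℕ → Ω → ℝ)
    (hTh : ∀ t ω, Th t ω = (N t ω : ℝ)⁻¹ *
      ∑ k ∈ Finset.range (N t ω), (truncHit i (2 ^ t) (p t k ω) : ℝ))
    (hN1 : ∀ ω, N 1 ω = ⌈6 * (1 + ε) * Real.log (8 / α) / ε ^ 2⌉₊)
    (hNsucc : ∀ t ω, 1 ≤ t → N (t + 1) ω =
      ⌈3 * (1 + ε) * (2 ^ (t + 1) : ℝ) * Real.log (4 * (2 ^ (t + 1) : ℝ) / α) /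
        (Th t ω * ε ^ 2)⌉₊)
    (T : ℕ) (hp : ∀ s k, s ≤ T → Measurable[m0] (p s k)) :
    ∀ s, 1 ≤ s → s ≤ T → Measurable[m0] (N s) ∧ Measurable[m0] (Th s) := by
  intro s
  induction s with
  | zero => intro h; omega
  | succ r ih =>
    intro _ hsT
    have hX : ∀ k, Measurable[m0]
        (fun ω => (truncHit i (2^(r+1)) (p (r+1) k ω) : ℝ)) := fun k =>
      ((measurable_of_countable (fun n : ℕ => (n:ℝ))).comp aux_measurable_truncHit).comp
        (hp (r+1) k hsT)
    have hN : Measurable[m0] (N (r+1)) := by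
      rcases Nat.eq_zero_or_pos r with h0 | h1
      · subst h0
        have heq : N 1 = fun _ => ⌈6 * (1 + ε) * Real.log (8 / α) / ε ^ 2⌉₊ :=
          funext hN1
        rw [heq]; exact measurable_const
      · have hT : Measurable[m0] (Th r) := (ih h1 (by omega)).2
        have heq : N (r+1) = fun ω =>
            ⌈3 * (1 + ε) * (2 ^ (r + 1) : ℝ) * Real.log (4 * (2 ^ (r + 1) : ℝ) / α) /
              (Th r ω * ε ^ 2)⌉₊ := funext fun ω => hNsucc r ω h1
        rw [heq]
        exact aux_measurable_natCeil.comp (measurable_const.div (hT.mul_const _))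
    refine ⟨hN, ?_⟩
    have heq : Th (r+1) = fun ω => ((N (r+1) ω : ℝ))⁻¹ *
        ∑ k ∈ Finset.range (N (r+1) ω),
          (truncHit i (2^(r+1)) (p (r+1) k ω) : ℝ) := funext (hTh (r+1))
    rw [heq]
    exact aux_measurable_nat_piece hN
      (h := fun n ω => ((n:ℝ))⁻¹ * ∑ k ∈ Finset.range n,
        (truncHit i (2^(r+1)) (p (r+1) k ω) : ℝ))
      (fun n => ((Finset.measurable_sum (Finset.range n) (fun k _ => hX k)).const_mul _))

lemma aux_det [MeasurableSpace Ω] {ε α : ℝ} (i : S)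
    (p : ℕ → ℕ → Ω → ℕ → S) (N : ℕ → Ω → ℕ) (Th : ℕ → Ω → ℝ)
    (hTh : ∀ t ω, Th t ω = (N t ω : ℝ)⁻¹ *
      ∑ k ∈ Finset.range (N t ω), (truncHit i (2 ^ t) (p t k ω) : ℝ))
    (hN1 : ∀ ω, N 1 ω = ⌈6 * (1 + ε) * Real.log (8 / α) / ε ^ 2⌉₊)
    (hNsucc : ∀ t ω, 1 ≤ t → N (t + 1) ω =
      ⌈3 * (1 + ε) * (2 ^ (t + 1) : ℝ) * Real.log (4 * (2 ^ (t + 1) : ℝ) / α) /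
        (Th t ω * ε ^ 2)⌉₊)
    (hε0 : 0 < ε) (hα0 : 0 < α) (hα1 : α < 1) :
    ∀ t, 1 ≤ t → ∀ ω, 1 ≤ N t ω ∧ 1 ≤ Th t ω := by
  intro t
  induction t with
  | zero => intro h; omega
  | succ r ih =>
    intro _ ω
    have hN : 1 ≤ N (r+1) ω := by
      rcases Nat.eq_zero_or_pos r with h0 | h1
      · subst h0
        rw [hN1 ω]
        refine Nat.one_le_iff_ne_zero.mpr (Nat.pos_iff_ne_zero.mp (Nat.ceil_pos.mpr ?_))
        have hlog : 0 < Real.log (8 / α) :=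
          Real.log_pos (by rw [lt_div_iff₀ hα0]; linarith)
        have hnum : (0:ℝ) < 6 * (1 + ε) * Real.log (8 / α) := by
          nlinarith [mul_pos (show (0:ℝ) < 1 + ε by linarith) hlog]
        exact div_pos hnum (pow_pos hε0 2)
      · rw [hNsucc r ω h1]
        refine Nat.one_le_iff_ne_zero.mpr (Nat.pos_iff_ne_zero.mp (Nat.ceil_pos.mpr ?_))
        have hT1 : (1:ℝ) ≤ Th r ω := (ih h1 ω).2
        have hlog : 0 < Real.log (4 * (2 ^ (r + 1) : ℝ) / α) := by
          apply Real.log_pos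
          rw [lt_div_iff₀ hα0]
          have h2 : (1:ℝ) ≤ (2:ℝ) ^ (r+1) := one_le_pow₀ (by norm_num : (1:ℝ) ≤ 2)
          nlinarith
        have hT0 : (0:ℝ) < Th r ω := by linarith
        have hnum : (0:ℝ) < 3 * (1 + ε) * (2 ^ (r + 1) : ℝ) *
            Real.log (4 * (2 ^ (r + 1) : ℝ) / α) := by
          nlinarith [mul_pos (mul_pos (show (0:ℝ) < 3 * (1 + ε) by linarith)
            (show (0:ℝ) < (2:ℝ)^(r+1) by positivity)) hlog]
        exact div_pos hnum (mul_pos hT0 (pow_pos hε0 2))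
    refine ⟨hN, ?_⟩
    rw [hTh (r+1) ω]
    set n := N (r+1) ω with hndef
    have hn0 : (0:ℝ) < (n:ℝ) := by exact_mod_cast hN
    have hsum : (n:ℝ) ≤ ∑ k ∈ Finset.range n, (truncHit i (2^(r+1)) (p (r+1) k ω) : ℝ) := by
      calc (n:ℝ) = ∑ _k ∈ Finset.range n, (1:ℝ) := by simp
        _ ≤ _ := by
            apply Finset.sum_le_sum
            intro k _
            exact_mod_cast aux_one_le_truncHit (Nat.one_le_two_pow)
    calc (1:ℝ) = (n:ℝ)⁻¹ * n := by rw [inv_mul_cancel₀ hn0.ne']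
      _ ≤ _ := mul_le_mul_of_nonneg_left hsum (by positivity)

lemma aux_chernoff [MeasurableSpace Ω] (C : Chain S) (i : S) (hrec : C.PositiveRecurrent)
    {ε : ℝ} (hε0 : 0 < ε) (hε1 : ε ≤ 1)
    (V : MeasureTheory.Measure Ω) [IsProbabilityMeasure V]
    (p : ℕ → ℕ → Ω → ℕ → S)
    (hmeas : ∀ t k, Measurable (p t k))
    (hlaw : ∀ t k, V.map (p t k) = C.μ i)
    (hindep : iIndepFun (fun q : ℕ × ℕ => p q.1 q.2) V)
    (t n : ℕ) :
    V {ω | (1+ε) * C.ERet i i * n ≤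
        ∑ k ∈ Finset.range n, (truncHit i (2^t) (p t k ω) : ℝ)}
      ≤ ENNReal.ofReal (Real.exp (-(ε^2/3) * (C.ERet i i / 2^t) * n)) := by
  haveI := C.isProb i
  set m := C.ERet i i with hmdef
  have hm1 : 1 ≤ m := aux_ERet_one C i hrec
  set θ : ℕ := 2^t with hθdef
  have hθ1 : 1 ≤ θ := Nat.one_le_two_pow
  have hθR : (0:ℝ) < (θ:ℝ) := by exact_mod_cast Nat.lt_of_lt_of_le Nat.zero_lt_one hθ1
  have hθcast : ((θ:ℕ):ℝ) = (2:ℝ)^t := by rw [hθdef]; push_cast; ring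
  set lam : ℝ := Real.log (1+ε) / θ with hlamdef
  have hlam0 : 0 ≤ lam := div_nonneg (Real.log_nonneg (by linarith)) hθR.le
  have hexplam : Real.exp (lam * θ) = 1 + ε := by
    rw [hlamdef, div_mul_cancel₀ _ hθR.ne', Real.exp_log (by linarith)]
  set X : (ℕ → S) → ℝ := fun f => (truncHit i θ f : ℝ) with hXdef
  have hXmeas : Measurable X :=
    (measurable_of_countable (fun n : ℕ => (n:ℝ))).comp aux_measurable_truncHit
  have hX0 : ∀ f, 0 ≤ X f := fun f => Nat.cast_nonneg _
  have hXθ : ∀ f, X f ≤ (θ:ℝ) := by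
    intro f
    simp only [hXdef]
    exact_mod_cast (aux_truncHit_le : truncHit i θ f ≤ θ)
  have hXint : Integrable X (C.μ i) := by
    refine (integrable_const ((θ:ℝ))).mono' hXmeas.aestronglyMeasurable ?_
    exact Filter.Eventually.of_forall fun f => by
      rw [Real.norm_eq_abs, abs_of_nonneg (hX0 f)]; exact hXθ f
  have hEX : ∫ f, X f ∂(C.μ i) ≤ m := by
    have hTN : ∀ᵐ f ∂(C.μ i), X f ≤ ((hit i f).toNat : ℝ) := by
      have h0 : ∀ᵐ f ∂(C.μ i), ¬ (hit i f = ⊤) := by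
        rw [MeasureTheory.ae_iff]
        simpa using (hrec i).1
      filter_upwards [h0] with f hf
      simp only [hXdef]
      exact_mod_cast aux_truncHit_le_toNat_hit hf
    exact integral_mono_ae hXint (hrec i).2 hTN
  have hsingle : ∫ f, Real.exp (lam * X f) ∂(C.μ i) ≤ Real.exp (m/θ * ε) := by
    have hptw : ∀ f, Real.exp (lam * X f) ≤ 1 + (X f/(θ:ℝ)) * ε := by
      intro f
      have h := aux_exp_convex (hX0 f) (hXθ f) hθR hlam0
      rwa [hexplam, add_sub_cancel_left] at h
    have hint2 : Integrable (fun f => 1 + (X f/(θ:ℝ)) * ε) (C.μ i) :=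
      (integrable_const 1).add ((hXint.div_const (θ:ℝ)).mul_const ε)
    have hintexp : Integrable (fun f => Real.exp (lam * X f)) (C.μ i) := by
      refine (integrable_const (Real.exp (lam * θ))).mono'
        ((hXmeas.const_mul lam).exp.aestronglyMeasurable) ?_
      refine Filter.Eventually.of_forall fun f => ?_
      rw [Real.norm_eq_abs, abs_of_pos (Real.exp_pos _)]
      exact Real.exp_le_exp.mpr (mul_le_mul_of_nonneg_left (hXθ f) hlam0)
    calc ∫ f, Real.exp (lam * X f) ∂(C.μ i)
        ≤ ∫ f, (1 + (X f/(θ:ℝ)) * ε) ∂(C.μ i) := integral_mono hintexp hint2 hptw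
      _ = 1 + (∫ f, X f ∂(C.μ i))/(θ:ℝ) * ε := by
          rw [integral_add (integrable_const 1) ((hXint.div_const (θ:ℝ)).mul_const ε),
            integral_mul_const, integral_div]
          simp
      _ ≤ 1 + m/(θ:ℝ) * ε := by gcongr
      _ ≤ Real.exp (m/θ * ε) := by linarith [Real.add_one_le_exp (m/(θ:ℝ) * ε)]
  set Y : ℕ → Ω → ℝ := fun k ω => X (p t k ω) with hYdef
  have hYmeas : ∀ k, Measurable (Y k) := fun k => hXmeas.comp (hmeas t k)
  have hYmgf : ∀ k, mgf (Y k) V lam ≤ Real.exp (m/θ * ε) := by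
    intro k
    have hrw : mgf (Y k) V lam = ∫ f, Real.exp (lam * X f) ∂(C.μ i) := by
      rw [← hlaw t k,
        integral_map (hmeas t k).aemeasurable
          ((hXmeas.const_mul lam).exp.aestronglyMeasurable), mgf]
    rw [hrw]; exact hsingle
  have hindepY : iIndepFun Y V := by
    have hinj : Function.Injective (fun k : ℕ => ((t, k) : ℕ × ℕ)) := by
      intro a b hab
      simpa using congrArg Prod.snd hab
    have h1 := aux_iIndepFun_precomp hindep (fun k : ℕ => ((t, k) : ℕ × ℕ)) hinj
    exact h1.comp (fun _ => X) (fun _ => hXmeas)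
  have hYbdd : ∀ k ω, Y k ω ≤ (θ:ℝ) := fun k ω => hXθ _
  have hsum_meas : Measurable (fun ω => (∑ k ∈ Finset.range n, Y k) ω) := by
    simp only [Finset.sum_apply]
    exact Finset.measurable_sum _ fun k _ => hYmeas k
  have hint_sum : Integrable
      (fun ω => Real.exp (lam * (∑ k ∈ Finset.range n, Y k) ω)) V := by
    refine (integrable_const (Real.exp (lam * (n * θ)))).mono'
      ((hsum_meas.const_mul lam).exp).aestronglyMeasurable ?_
    · refine Filter.Eventually.of_forall fun ω => ?_
      rw [Real.norm_eq_abs, abs_of_pos (Real.exp_pos _)]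
      apply Real.exp_le_exp.mpr
      apply mul_le_mul_of_nonneg_left _ hlam0
      rw [Finset.sum_apply]
      calc ∑ k ∈ Finset.range n, Y k ω ≤ ∑ _k ∈ Finset.range n, (θ:ℝ) :=
          Finset.sum_le_sum fun k _ => hYbdd k ω
        _ = n * θ := by simp [mul_comm]
  have hchern := measure_ge_le_exp_mul_mgf (X := ∑ k ∈ Finset.range n, Y k)
    (μ := V) ((1+ε) * m * n) hlam0 hint_sum
  have hmgfsum := hindepY.mgf_sum hYmeas (Finset.range n) (t := lam)
  have hprod : ∏ k ∈ Finset.range n, mgf (Y k) V lam ≤ Real.exp (m/θ * ε) ^ n := by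
    calc ∏ k ∈ Finset.range n, mgf (Y k) V lam
        ≤ ∏ _k ∈ Finset.range n, Real.exp (m/θ * ε) :=
          Finset.prod_le_prod (fun k _ => mgf_nonneg) (fun k _ => hYmgf k)
      _ = Real.exp (m/θ * ε) ^ n := by rw [Finset.prod_const, Finset.card_range]
  have hfinal : (V {ω | (1+ε) * m * n ≤ (∑ k ∈ Finset.range n, Y k) ω}).toReal
      ≤ Real.exp (-(ε^2/3) * (m / 2^t) * n) := by
    calc (V {ω | (1+ε) * m * n ≤ (∑ k ∈ Finset.range n, Y k) ω}).toReal
        ≤ Real.exp (-lam * ((1+ε) * m * n)) * mgf (∑ k ∈ Finset.range n, Y k) V lam :=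
          hchern
      _ ≤ Real.exp (-lam * ((1+ε) * m * n)) * Real.exp (m/θ * ε) ^ n := by
          rw [hmgfsum]
          exact mul_le_mul_of_nonneg_left hprod (Real.exp_nonneg _)
      _ = Real.exp (-lam * ((1+ε) * m * n) + n * (m/θ * ε)) := by
          rw [← Real.exp_nat_mul, ← Real.exp_add]
      _ ≤ Real.exp (-(ε^2/3) * (m / 2^t) * n) := by
          apply Real.exp_le_exp.mpr
          have hkey := aux_key hε0 hε1
          have hfac : (0:ℝ) ≤ (n:ℝ) * m / θ :=
            div_nonneg (mul_nonneg (Nat.cast_nonneg n) (by linarith)) (Nat.cast_nonneg θ)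
          have e1 : -lam * ((1+ε) * m * n) + n * (m/θ * ε)
              = ((n:ℝ) * m / θ) * (ε - (1+ε) * Real.log (1+ε)) := by
            rw [hlamdef]
            field_simp
            ring
          have e2 : -(ε^2/3) * (m / 2^t) * n = ((n:ℝ) * m / θ) * (-(ε^2/3)) := by
            rw [hθcast]; ring
          rw [e1, e2]
          apply mul_le_mul_of_nonneg_left _ hfac
          linarith
  have hseteq : {ω | (1+ε) * m * n ≤
      ∑ k ∈ Finset.range n, (truncHit i (2^t) (p t k ω) : ℝ)}
      = {ω | (1+ε) * m * n ≤ (∑ k ∈ Finset.range n, Y k) ω} := by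
    ext ω
    simp only [Set.mem_setOf_eq, Finset.sum_apply, hYdef, hXdef, hθdef]
  rw [hseteq, ← ENNReal.ofReal_toReal (measure_ne_top V _)]
  exact ENNReal.ofReal_le_ofReal hfinal

lemma aux_step_one [MeasurableSpace Ω] (C : Chain S) (i : S) (hrec : C.PositiveRecurrent)
    {ε α : ℝ} (hε0 : 0 < ε) (hε1 : ε ≤ 1) (hα0 : 0 < α) (hα1 : α < 1)
    (V : MeasureTheory.Measure Ω) [IsProbabilityMeasure V]
    (p : ℕ → ℕ → Ω → ℕ → S)
    (hmeas : ∀ t k, Measurable (p t k))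
    (hlaw : ∀ t k, V.map (p t k) = C.μ i)
    (hindep : iIndepFun (fun q : ℕ × ℕ => p q.1 q.2) V)
    (N : ℕ → Ω → ℕ) (Th : ℕ → Ω → ℝ)
    (hTh : ∀ t ω, Th t ω = (N t ω : ℝ)⁻¹ *
      ∑ k ∈ Finset.range (N t ω), (truncHit i (2 ^ t) (p t k ω) : ℝ))
    (hN1 : ∀ ω, N 1 ω = ⌈6 * (1 + ε) * Real.log (8 / α) / ε ^ 2⌉₊) :
    V {ω | (1+ε) * C.ERet i i < Th 1 ω} ≤ ENNReal.ofReal (α/2^(0+3)) := by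
  set m := C.ERet i i with hmdef
  have hm1 : 1 ≤ m := aux_ERet_one C i hrec
  set n1 : ℕ := ⌈6 * (1 + ε) * Real.log (8 / α) / ε ^ 2⌉₊ with hn1def
  have hL : 0 < Real.log (8/α) := Real.log_pos (by rw [lt_div_iff₀ hα0]; linarith)
  have hn1pos : 0 < n1 := Nat.ceil_pos.mpr (by
    have hnum : (0:ℝ) < 6 * (1 + ε) * Real.log (8 / α) := by
      nlinarith [mul_pos (show (0:ℝ) < 1 + ε by linarith) hL]
    exact div_pos hnum (pow_pos hε0 2))
  have hn1R : (0:ℝ) < (n1:ℝ) := by exact_mod_cast hn1pos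
  have hsub : {ω | (1+ε)*m < Th 1 ω} ⊆
      {ω | (1+ε)*m*(n1:ℝ) ≤ ∑ k ∈ Finset.range n1, (truncHit i (2^1) (p 1 k ω) : ℝ)} := by
    intro ω hω
    simp only [Set.mem_setOf_eq] at hω ⊢
    have hTh1 := hTh 1 ω
    rw [hN1 ω] at hTh1
    have hlt : (1+ε)*m*(n1:ℝ) < Th 1 ω * n1 := mul_lt_mul_of_pos_right hω hn1R
    have heq : Th 1 ω * n1 = ∑ k ∈ Finset.range n1, (truncHit i (2^1) (p 1 k ω) : ℝ) := by
      rw [hTh1]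
      field_simp
    linarith [heq ▸ hlt]
  refine le_trans (measure_mono hsub)
    (le_trans (aux_chernoff C i hrec hε0 hε1 V p hmeas hlaw hindep 1 n1) ?_)
  apply ENNReal.ofReal_le_ofReal
  have hn1ge : 6 * (1 + ε) * Real.log (8 / α) / ε ^ 2 ≤ (n1:ℝ) := Nat.le_ceil _
  rw [div_le_iff₀ (pow_pos hε0 2)] at hn1ge
  have hexp : Real.log (8/α) ≤ (ε^2/3) * (m/2^1) * n1 := by
    have haux : (1:ℝ) * (ε^2 * n1) ≤ m * (ε^2 * n1) :=
      mul_le_mul_of_nonneg_right hm1 (by positivity)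
    nlinarith [hL, hε0, mul_nonneg (mul_nonneg hε0.le hL.le) (Nat.cast_nonneg n1)]
  calc Real.exp (-(ε^2/3) * (m/2^1) * n1) ≤ Real.exp (-(Real.log (8/α))) := by
        apply Real.exp_le_exp.mpr
        have : (ε^2/3) * (m/2^1) * n1 = -(-(ε^2/3) * (m/2^1) * n1) := by ring
        linarith [this ▸ hexp]
    _ = α/8 := by rw [Real.exp_neg, Real.exp_log (div_pos (by norm_num) hα0), inv_div]
    _ = α/2^(0+3) := by norm_num

lemma aux_step_succ [mΩ : MeasurableSpace Ω] (C : Chain S) (i : S) (hrec : C.PositiveRecurrent)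
    {ε α : ℝ} (hε0 : 0 < ε) (hε1 : ε ≤ 1) (hα0 : 0 < α) (hα1 : α < 1)
    (V : MeasureTheory.Measure Ω) [IsProbabilityMeasure V]
    (p : ℕ → ℕ → Ω → ℕ → S)
    (hmeas : ∀ t k, Measurable (p t k))
    (hlaw : ∀ t k, V.map (p t k) = C.μ i)
    (hindep : iIndepFun (fun q : ℕ × ℕ => p q.1 q.2) V)
    (N : ℕ → Ω → ℕ) (Th : ℕ → Ω → ℝ)
    (hTh : ∀ t ω, Th t ω = (N t ω : ℝ)⁻¹ *
      ∑ k ∈ Finset.range (N t ω), (truncHit i (2 ^ t) (p t k ω) : ℝ))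
    (hN1 : ∀ ω, N 1 ω = ⌈6 * (1 + ε) * Real.log (8 / α) / ε ^ 2⌉₊)
    (hNsucc : ∀ t ω, 1 ≤ t → N (t + 1) ω =
      ⌈3 * (1 + ε) * (2 ^ (t + 1) : ℝ) * Real.log (4 * (2 ^ (t + 1) : ℝ) / α) /
        (Th t ω * ε ^ 2)⌉₊)
    (hTh1 : ∀ t ω, 1 ≤ t → 1 ≤ Th t ω)
    (t : ℕ) (ht : 1 ≤ t) :
    V ({ω | Th t ω ≤ (1+ε) * C.ERet i i} ∩ {ω | (1+ε) * C.ERet i i < Th (t+1) ω})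
      ≤ ENNReal.ofReal (α/2^(t+3)) := by
  set m := C.ERet i i with hmdef
  have hm1 : 1 ≤ m := aux_ERet_one C i hrec
  set θR : ℝ := (2:ℝ)^(t+1) with hθRdef
  have hθR0 : (0:ℝ) < θR := by positivity
  have hθR1 : (1:ℝ) ≤ θR := by
    rw [hθRdef]; exact one_le_pow₀ (by norm_num)
  set L : ℝ := Real.log (4 * θR / α) with hLdef
  have h4θ : (0:ℝ) < 4 * θR / α := div_pos (by nlinarith) hα0
  have hL0 : 0 < L := by
    rw [hLdef]
    apply Real.log_pos
    rw [lt_div_iff₀ hα0]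
    nlinarith
  -- the events
  set Sev : ℕ → Set Ω := fun n =>
    Th t ⁻¹' (Set.Iic ((1+ε) * m)) ∩ N (t+1) ⁻¹' {n} with hSevdef
  set Bad : ℕ → Set Ω := fun n =>
    {ω | (1+ε) * m * (n:ℝ) ≤ ∑ k ∈ Finset.range n, (truncHit i (2^(t+1)) (p (t+1) k ω) : ℝ)}
    with hBaddef
  -- F-measurability facts
  have hpF : ∀ s k, s ≤ t → Measurable[⨆ q ∈ {q : ℕ × ℕ | q.1 ≤ t},
      MeasurableSpace.comap ((fun q : ℕ × ℕ => p q.1 q.2) q) inferInstance] (p s k) := by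
    intro s k hs
    apply Measurable.of_comap_le
    exact le_iSup₂ (f := fun (q : ℕ × ℕ) (_ : q ∈ {q : ℕ × ℕ | q.1 ≤ t}) =>
      MeasurableSpace.comap ((fun q : ℕ × ℕ => p q.1 q.2) q) inferInstance) (s, k) hs
  have hNT := aux_meas_NT _ i ε α p N Th hTh hN1 hNsucc t hpF
  have hThtF := (hNT t ht le_rfl).2
  have hNsuccF : Measurable[⨆ q ∈ {q : ℕ × ℕ | q.1 ≤ t},
      MeasurableSpace.comap ((fun q : ℕ × ℕ => p q.1 q.2) q) inferInstance] (N (t+1)) := by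
    have heq : N (t+1) = fun ω =>
        ⌈3 * (1 + ε) * (2 ^ (t + 1) : ℝ) * Real.log (4 * (2 ^ (t + 1) : ℝ) / α) /
          (Th t ω * ε ^ 2)⌉₊ := funext fun ω => hNsucc t ω ht
    rw [heq]
    exact aux_measurable_natCeil.comp (measurable_const.div (hThtF.mul_const _))
  have hSevF : ∀ n, MeasurableSet[⨆ q ∈ {q : ℕ × ℕ | q.1 ≤ t},
      MeasurableSpace.comap ((fun q : ℕ × ℕ => p q.1 q.2) q) inferInstance] (Sev n) :=
    fun n => (hThtF measurableSet_Iic).inter (hNsuccF (measurableSet_singleton n))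
  have hBadG : ∀ n, MeasurableSet[⨆ q ∈ {q : ℕ × ℕ | q.1 = t + 1},
      MeasurableSpace.comap ((fun q : ℕ × ℕ => p q.1 q.2) q) inferInstance] (Bad n) := by
    intro n
    have hXG : ∀ k, Measurable[⨆ q ∈ {q : ℕ × ℕ | q.1 = t + 1},
        MeasurableSpace.comap ((fun q : ℕ × ℕ => p q.1 q.2) q) inferInstance]
        (fun ω => (truncHit i (2^(t+1)) (p (t+1) k ω) : ℝ)) := by
      intro k
      refine ((measurable_of_countable (fun n : ℕ => (n:ℝ))).comp
        aux_measurable_truncHit).comp (Measurable.of_comap_le ?_)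
      exact le_iSup₂ (f := fun (q : ℕ × ℕ) (_ : q ∈ {q : ℕ × ℕ | q.1 = t + 1}) =>
        MeasurableSpace.comap ((fun q : ℕ × ℕ => p q.1 q.2) q) inferInstance) (t+1, k) rfl
    exact measurableSet_le measurable_const
      (Finset.measurable_sum (Finset.range n) fun k _ => hXG k)
  have hFle : (⨆ q ∈ {q : ℕ × ℕ | q.1 ≤ t},
      MeasurableSpace.comap ((fun q : ℕ × ℕ => p q.1 q.2) q) inferInstance) ≤ mΩ :=
    iSup₂_le fun q _ => (hmeas q.1 q.2).comap_le
  have hSevMeas : ∀ n, MeasurableSet (Sev n) := fun n => hFle _ (hSevF n)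
  -- inclusion
  have hincl : {ω | Th t ω ≤ (1+ε) * m} ∩ {ω | (1+ε) * m < Th (t+1) ω}
      ⊆ ⋃ n, (Sev n ∩ Bad n) := by
    intro ω ⟨hω1, hω2⟩
    simp only [Set.mem_setOf_eq] at hω1 hω2
    refine Set.mem_iUnion.mpr ⟨N (t+1) ω, ⟨⟨hω1, rfl⟩, ?_⟩⟩
    simp only [hBaddef, Set.mem_setOf_eq]
    set n := N (t+1) ω with hndef
    have hTheq := hTh (t+1) ω
    rw [← hndef] at hTheq
    rcases Nat.eq_zero_or_pos n with h0 | h1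
    · exfalso
      rw [h0] at hTheq
      simp at hTheq
      rw [hTheq] at hω2
      nlinarith
    · have hnR : (0:ℝ) < (n:ℝ) := by exact_mod_cast h1
      have heq : Th (t+1) ω * n =
          ∑ k ∈ Finset.range n, (truncHit i (2^(t+1)) (p (t+1) k ω) : ℝ) := by
        rw [hTheq]; field_simp
      have hlt : (1+ε)*m*(n:ℝ) < Th (t+1) ω * n := mul_lt_mul_of_pos_right hω2 hnR
      linarith [heq ▸ hlt]
  -- per-n bound
  have hterm : ∀ n : ℕ, V (Sev n ∩ Bad n) ≤ V (Sev n) * ENNReal.ofReal (α/2^(t+3)) := by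
    intro n
    by_cases hn : 3 * (1+ε) * θR * L / ((1+ε) * m * ε^2) ≤ (n:ℝ)
    · have hprodeq : V (Sev n ∩ Bad n) = V (Sev n) * V (Bad n) :=
        aux_indep_piece (fun q => hmeas q.1 q.2) hindep t (Sev n) (Bad n) (hSevF n) (hBadG n)
      rw [hprodeq]
      apply mul_le_mul_right
      have hch := aux_chernoff C i hrec hε0 hε1 V p hmeas hlaw hindep (t+1) n
      rw [← hmdef] at hch
      refine le_trans hch (ENNReal.ofReal_le_ofReal ?_)
      have hexp : L ≤ (ε^2/3) * (m/2^(t+1)) * n := by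
        have hden : (0:ℝ) < (1+ε) * m * ε^2 :=
          mul_pos (mul_pos (by linarith) (by linarith)) (pow_pos hε0 2)
        rw [div_le_iff₀ hden] at hn
        have hgoal : (ε^2/3) * (m/2^(t+1)) * n = (ε^2 * m * n) / (3 * θR) := by
          rw [hθRdef]; field_simp; try ring
        have h3θ : (0:ℝ) < 3 * θR := by nlinarith
        rw [hgoal, le_div_iff₀ h3θ]
        nlinarith [hn, hε0, hL0, hθR0, hm1]
      calc Real.exp (-(ε^2/3) * (m/2^(t+1)) * n) ≤ Real.exp (-L) := by
            apply Real.exp_le_exp.mpr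
            nlinarith [hexp]
        _ = α / (4 * θR) := by
            rw [hLdef, Real.exp_neg, Real.exp_log h4θ, inv_div]
        _ = α / 2^(t+3) := by
            rw [hθRdef]
            congr 1
            rw [pow_add]
            ring
    · have hempty : Sev n = ∅ := by
        rw [Set.eq_empty_iff_forall_notMem]
        intro ω hω
        obtain ⟨hω1, hω2⟩ := hω
        simp only [Set.mem_preimage, Set.mem_Iic, Set.mem_singleton_iff] at hω1 hω2
        apply hn
        have hThpos : (1:ℝ) ≤ Th t ω := hTh1 t ω ht
        have hnum : (0:ℝ) ≤ 3 * (1+ε) * θR * L :=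
          mul_nonneg (mul_nonneg (by linarith) hθR0.le) hL0.le
        have hle1 : 3 * (1+ε) * θR * L / ((1+ε) * m * ε^2)
            ≤ 3 * (1+ε) * θR * L / (Th t ω * ε^2) := by
          apply div_le_div_of_nonneg_left hnum
            (mul_pos (by linarith) (pow_pos hε0 2))
          exact mul_le_mul_of_nonneg_right hω1 (sq_nonneg ε)
        have hle2 : 3 * (1+ε) * θR * L / (Th t ω * ε^2) ≤ (n:ℝ) := by
          rw [← hω2, hNsucc t ω ht, ← hθRdef, ← hLdef]
          exact Nat.le_ceil _
        linarith
      have hempty2 : Sev n ∩ Bad n = ∅ := by rw [hempty]; simp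
      rw [hempty2]
      simp
  -- disjointness
  have hdisj : Pairwise (Function.onFun Disjoint (fun n => Sev n ∩ Bad n)) := by
    intro a b hab
    rw [Function.onFun, Set.disjoint_left]
    rintro ω ⟨⟨_, ha2⟩, _⟩ ⟨⟨_, hb2⟩, _⟩
    simp only [Set.mem_preimage, Set.mem_singleton_iff] at ha2 hb2
    exact hab (ha2 ▸ hb2 ▸ rfl)
  have hdisj' : Pairwise (Function.onFun Disjoint Sev) := by
    intro a b hab
    rw [Function.onFun, Set.disjoint_left]
    rintro ω ⟨_, ha2⟩ ⟨_, hb2⟩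
    simp only [Set.mem_preimage, Set.mem_singleton_iff] at ha2 hb2
    exact hab (ha2 ▸ hb2 ▸ rfl)
  calc V ({ω | Th t ω ≤ (1+ε) * m} ∩ {ω | (1+ε) * m < Th (t+1) ω})
      ≤ V (⋃ n, (Sev n ∩ Bad n)) := measure_mono hincl
    _ ≤ ∑' n, V (Sev n ∩ Bad n) := measure_iUnion_le _
    _ ≤ ∑' n, V (Sev n) * ENNReal.ofReal (α/2^(t+3)) := ENNReal.tsum_le_tsum hterm
    _ = (∑' n, V (Sev n)) * ENNReal.ofReal (α/2^(t+3)) := ENNReal.tsum_mul_right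
    _ = V (⋃ n, Sev n) * ENNReal.ofReal (α/2^(t+3)) := by
        rw [measure_iUnion hdisj' hSevMeas]
    _ ≤ 1 * ENNReal.ofReal (α/2^(t+3)) :=
        mul_le_mul_left prob_le_one _
    _ = ENNReal.ofReal (α/2^(t+3)) := one_mul _

end AuxMain


/-- Theorem 1 of the paper. With probability at least `1 − α`, for every
iteration `t` the estimate satisfies `π̂_i^{(t)} ≥ π_i/(1+ε)`; consequently, on this event,
if the algorithm ever satisfies termination condition (a) (i.e. `π̂_i^{(t)} < Δ/(1+ε)`,
output `0`) then indeed `π_i < Δ`, and equivalently if `π_i ≥ Δ` then whenever the algorithm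
terminates it does so at condition (b) (output `1`). -/
theorem statement9 {S : Type*} [MeasurableSpace S] [MeasurableSingletonClass S] [Countable S]
    (C : Chain S) (hirr : C.Irreducible) (hrec : C.PositiveRecurrent)
    (i : S) (Δ ε α : ℝ) (hΔ : Δ ∈ Set.Ioo (0 : ℝ) 1)
    (hε : ε ∈ Set.Ioo (0 : ℝ) 1) (hα : α ∈ Set.Ioo (0 : ℝ) 1)
    {Ω : Type*} [MeasurableSpace Ω] (A : Algo C i ε α Ω) :
    1 - α ≤ (A.vol {ω |
      (∀ t, 1 ≤ t → C.statPi i / (1 + ε) ≤ (A.That t ω)⁻¹) ∧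
      ((∃ t, 1 ≤ t ∧ (A.That t ω)⁻¹ < Δ / (1 + ε)) → C.statPi i < Δ) ∧
      (Δ ≤ C.statPi i → ∀ t, 1 ≤ t → A.stops Δ t ω →
        A.phat t ω * (A.That t ω)⁻¹ < ε * Δ)}).toReal := by
  classical
  obtain ⟨hΔ0, hΔ1⟩ := hΔ
  obtain ⟨hε0, hε1⟩ := hε
  obtain ⟨hα0, hα1⟩ := hα
  haveI : IsProbabilityMeasure A.vol := A.isProb
  have hdet := aux_det i A.path A.Nsamp A.That A.hThat A.hN1 A.hNsucc hε0 hα0 hα1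
  have hThmeas : ∀ t, 1 ≤ t → Measurable (A.That t) := fun t ht =>
    (aux_meas_NT (inferInstance : MeasurableSpace Ω) i ε α A.path A.Nsamp A.That
      A.hThat A.hN1 A.hNsucc t (fun s k _ => A.meas_path s k) t ht le_rfl).2
  have hm1 : 1 ≤ C.ERet i i := aux_ERet_one C i hrec
  set Bs : ℕ → Set Ω := fun t => A.That t ⁻¹' Set.Iic ((1+ε) * C.ERet i i) with hBsdef
  have hBmeas : ∀ t, 1 ≤ t → MeasurableSet (Bs t) := fun t ht =>
    (hThmeas t ht) measurableSet_Iic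
  set G : Set Ω := ⋂ (t : ℕ), ⋂ (_ : 1 ≤ t), Bs t with hGdef
  have hGmeas : MeasurableSet G := by
    rw [hGdef]
    refine MeasurableSet.iInter fun t => MeasurableSet.iInter fun ht => hBmeas t ht
  -- bounds on the bad events
  have hE1 : A.vol ((Bs 1)ᶜ) ≤ ENNReal.ofReal (α/2^(0+3)) := by
    have hset : (Bs 1)ᶜ = {ω | (1+ε) * C.ERet i i < A.That 1 ω} := by
      ext ω
      simp [hBsdef, not_le]
    rw [hset]
    exact aux_step_one C i hrec hε0 hε1.le hα0 hα1 A.vol A.path A.meas_path A.law_path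
      A.indep_path A.Nsamp A.That A.hThat A.hN1
  have hEr : ∀ r : ℕ, A.vol (Bs (r+1) ∩ (Bs (r+2))ᶜ) ≤ ENNReal.ofReal (α/2^(r+4)) := by
    intro r
    have hset : Bs (r+1) ∩ (Bs (r+2))ᶜ =
        {ω | A.That (r+1) ω ≤ (1+ε) * C.ERet i i} ∩
          {ω | (1+ε) * C.ERet i i < A.That (r+2) ω} := by
      ext ω
      simp [hBsdef, not_le]
    rw [hset]
    have hss := aux_step_succ C i hrec hε0 hε1.le hα0 hα1 A.vol A.path A.meas_path A.law_path
      A.indep_path A.Nsamp A.That A.hThat A.hN1 A.hNsucc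
      (fun t ω ht => (hdet t ht ω).2) (r+1) (by omega)
    have harith : (r+1) + 3 = r + 4 := by omega
    rw [harith] at hss
    exact hss
  -- complement inclusion
  have hcompl : Gᶜ ⊆ (Bs 1)ᶜ ∪ ⋃ r, (Bs (r+1) ∩ (Bs (r+2))ᶜ) := by
    intro ω hω
    have hex : ∃ t, 1 ≤ t ∧ ω ∉ Bs t := by
      by_contra hc
      push_neg at hc
      exact hω (Set.mem_iInter.mpr fun t => Set.mem_iInter.mpr fun ht => hc t ht)
    have ht01 : 1 ≤ Nat.find hex := (Nat.find_spec hex).1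
    have ht02 : ω ∉ Bs (Nat.find hex) := (Nat.find_spec hex).2
    rcases hcase : Nat.find hex with _ | r
    · rw [hcase] at ht01; omega
    · rcases r with _ | r'
      · rw [hcase] at ht02
        exact Set.mem_union_left _ ht02
      · have hmem : ω ∈ Bs (r'+1) := by
          by_contra hc
          have hmin := Nat.find_min hex (m := r'+1) (by omega)
          push_neg at hmin
          exact hc (hmin (by omega))
        rw [hcase] at ht02
        refine Set.mem_union_right _ (Set.mem_iUnion.mpr ⟨r', ⟨hmem, ht02⟩⟩)
  -- summing up
  have hsum : A.vol Gᶜ ≤ ENNReal.ofReal (α/4) := by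
    have htsum : ∑' r : ℕ, ENNReal.ofReal (α/2^(r+4)) = ENNReal.ofReal (α/8) := by
      have heq : ∀ r : ℕ, α/2^(r+4) = (α/16) * (1/2)^r := by
        intro r
        rw [pow_add]
        rw [div_pow, one_pow]
        rw [div_mul_eq_div_div]
        ring
      have hsummable : Summable (fun r : ℕ => α/2^(r+4)) := by
        simp only [heq]
        exact (summable_geometric_two).mul_left _
      rw [← ENNReal.ofReal_tsum_of_nonneg
        (fun r => div_nonneg hα0.le (by positivity)) hsummable]
      congr 1
      calc ∑' r : ℕ, α/2^(r+4) = ∑' r : ℕ, (α/16) * (1/2)^r := tsum_congr heq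
        _ = (α/16) * ∑' r : ℕ, (1/2:ℝ)^r := tsum_mul_left
        _ = (α/16) * 2 := by rw [tsum_geometric_two]
        _ = α/8 := by ring
    calc A.vol Gᶜ ≤ A.vol ((Bs 1)ᶜ ∪ ⋃ r, (Bs (r+1) ∩ (Bs (r+2))ᶜ)) := measure_mono hcompl
      _ ≤ A.vol ((Bs 1)ᶜ) + A.vol (⋃ r, (Bs (r+1) ∩ (Bs (r+2))ᶜ)) := measure_union_le _ _
      _ ≤ ENNReal.ofReal (α/2^(0+3)) + ∑' r : ℕ, A.vol (Bs (r+1) ∩ (Bs (r+2))ᶜ) := by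
          exact add_le_add hE1 (measure_iUnion_le _)
      _ ≤ ENNReal.ofReal (α/2^(0+3)) + ∑' r : ℕ, ENNReal.ofReal (α/2^(r+4)) := by
          exact add_le_add le_rfl (ENNReal.tsum_le_tsum hEr)
      _ = ENNReal.ofReal (α/8) + ENNReal.ofReal (α/8) := by
          rw [htsum]
          norm_num
      _ = ENNReal.ofReal (α/4) := by
          rw [← ENNReal.ofReal_add (by linarith) (by linarith)]
          congr 1
          ring
  have hGclow : (A.vol Gᶜ).toReal ≤ α/4 := by
    rw [← ENNReal.toReal_ofReal (show (0:ℝ) ≤ α/4 by linarith)]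
    exact ENNReal.toReal_mono ENNReal.ofReal_ne_top hsum
  have hsplit : (A.vol G).toReal + (A.vol Gᶜ).toReal = 1 := by
    rw [← ENNReal.toReal_add (measure_ne_top _ _) (measure_ne_top _ _),
      measure_add_measure_compl hGmeas, measure_univ, ENNReal.toReal_one]
  -- inclusion of the good event into the target event
  have hsubF : G ⊆ {ω |
      (∀ t, 1 ≤ t → C.statPi i / (1 + ε) ≤ (A.That t ω)⁻¹) ∧
      ((∃ t, 1 ≤ t ∧ (A.That t ω)⁻¹ < Δ / (1 + ε)) → C.statPi i < Δ) ∧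
      (Δ ≤ C.statPi i → ∀ t, 1 ≤ t → A.stops Δ t ω →
        A.phat t ω * (A.That t ω)⁻¹ < ε * Δ)} := by
    intro ω hω
    have hB : ∀ t, 1 ≤ t → A.That t ω ≤ (1+ε) * C.ERet i i := by
      intro t ht
      have hmem := Set.mem_iInter.mp (Set.mem_iInter.mp hω t) ht
      simpa [hBsdef] using hmem
    have hP1 : ∀ t, 1 ≤ t → C.statPi i / (1+ε) ≤ (A.That t ω)⁻¹ := by
      intro t ht
      have hT1 : (1:ℝ) ≤ A.That t ω := (hdet t ht ω).2
      have hm0 : (0:ℝ) < C.ERet i i := by linarith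
      have hstat : C.statPi i = (C.ERet i i)⁻¹ := rfl
      rw [hstat]
      have h1 : (C.ERet i i)⁻¹ / (1+ε) = ((1+ε) * C.ERet i i)⁻¹ := by
        rw [mul_inv, div_eq_mul_inv, mul_comm]
      rw [h1]
      exact inv_anti₀ (by linarith) (hB t ht)
    refine ⟨hP1, ?_, ?_⟩
    · rintro ⟨t, ht, hlt⟩
      have hlt2 : C.statPi i / (1+ε) < Δ / (1+ε) := lt_of_le_of_lt (hP1 t ht) hlt
      have h1ε : (0:ℝ) < 1+ε := by linarith
      have hmul := mul_lt_mul_of_pos_right hlt2 h1ε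
      rwa [div_mul_cancel₀ _ h1ε.ne', div_mul_cancel₀ _ h1ε.ne'] at hmul
    · intro hΔle t ht hstop
      rcases hstop with hstopa | hstopb
      · exfalso
        have h1ε : (0:ℝ) < 1+ε := by linarith
        have hle2 : Δ / (1+ε) ≤ C.statPi i / (1+ε) := by
          have := mul_le_mul_of_nonneg_right hΔle (inv_nonneg.mpr h1ε.le)
          rwa [← div_eq_mul_inv, ← div_eq_mul_inv] at this
        exact absurd hstopa (not_lt.mpr (le_trans hle2 (hP1 t ht)))
      · exact hstopb
  calc 1 - α ≤ 1 - α/4 := by linarith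
    _ ≤ (A.vol G).toReal := by linarith [hGclow, hsplit]
    _ ≤ _ := ENNReal.toReal_mono (measure_ne_top _ _) (measure_mono hsubF)


end

end LocalStationary
end

section
/- Let {X_t} satisfy Assumption L, let i ∈ B, and let S_0 = 0, S_m = min{t > S_{m−1} : X_t ∈ B} denote the successive visit times to B. Then for any positive integer W and any real Z ≥ W, P_i(S_W > Z) ≤ exp( (0.8(1−ρ)/e^{η ν_max}) · ( 1.25·W·e^{2η ν_max}/((1−ρ)(e^{η ν_max} − ρ)) + W − Z ) ). -/
open MeasureTheory ProbabilityTheory Finset Set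
open scoped ENNReal NNReal Classical

namespace LocalStationary
set_option maxHeartbeats 1000000
set_option linter.unusedSectionVars false

noncomputable section

/-- Lyapunov data witnessing Assumption L for the chain `C`: a nonnegative function `V`
with bounded jumps along transitions, uniform negative drift `−γ` outside the finite
sublevel set `B = {x | V x ≤ b}`. -/
structure LyapunovData {S : Type*} [MeasurableSpace S] (C : Chain S) where
  V : S → ℝ
  nuMax : ℝ
  gam : ℝ
  b : ℝ
  V_nonneg : ∀ x, 0 ≤ V x
  nuMax_pos : 0 < nuMax
  gam_pos : 0 < gam
  b_nonneg : 0 ≤ b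
  finiteB : {x : S | V x ≤ b}.Finite
  bounded_jump : ∀ x y, C.trans x y ≠ 0 → |V y - V x| ≤ nuMax
  drift : ∀ x, b < V x → ∑' y, (C.trans x y).toReal * (V y - V x) < -gam

namespace LyapunovData

variable {S : Type*} [MeasurableSpace S] {C : Chain S}

/-- The finite set `B = {x | V x ≤ b}`. -/
def B (L : LyapunovData C) : Set S := {x | L.V x ≤ L.b}

/-- `η = γ / (2(e−2)ν_max²)`. -/
def eta (L : LyapunovData C) : ℝ := L.gam / (2 * (Real.exp 1 - 2) * L.nuMax ^ 2)

/-- `ρ = 1 − γ² / (4(e−2)ν_max²)`. -/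
def rho (L : LyapunovData C) : ℝ := 1 - L.gam ^ 2 / (4 * (Real.exp 1 - 2) * L.nuMax ^ 2)

/-- The number of time-steps `1 ≤ s ≤ T_i` at which the trajectory is in `B`, i.e. the
hitting time of `i` for the chain watched on its successive visits to `B`. -/
def watchCount (L : LyapunovData C) (i : S) (f : ℕ → S) : ℕ :=
  ((Finset.Icc 1 ((hit i f).toNat)).filter fun s => f s ∈ L.B).card

/-- `H_i^B`: the maximal (over starting states in `B`) expected hitting time of `i`
for the chain watched on `B`. -/
def HB (L : LyapunovData C) (i : S) : ℝ :=
  ⨆ j : L.B, ∫ f, (L.watchCount i f : ℝ) ∂ C.μ (j : S)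

/-- The constant `R_i` of the paper. -/
def R (L : LyapunovData C) (i : S) : ℝ :=
  2 * L.HB i * (1.25 * Real.exp (2 * L.eta * L.nuMax) /
      ((1 - L.rho) * (Real.exp (L.eta * L.nuMax) - L.rho)) + 1) +
    Real.log 2 * Real.exp (L.eta * L.nuMax) / (0.8 * (1 - L.rho))

/-- `S_m`, the time of the `m`-th visit (after time 0) of the trajectory to `B`
(equal to `⊤` if there is no such visit). -/
def visitTime (L : LyapunovData C) (f : ℕ → S) : ℕ → ℕ∞
  | 0 => 0
  | m + 1 => sInf {n : ℕ∞ | ∃ k : ℕ, n = (k : ℕ∞) ∧ visitTime L f m < (k : ℕ∞) ∧ f k ∈ L.B}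

end LyapunovData


section NumericAux
open Real




private lemma sum4 (x : ℝ) : ∑ m ∈ Finset.range 4, x ^ m / (Nat.factorial m : ℝ)
    = 1 + x + x^2/2 + x^3/6 := by
  norm_num [Finset.sum_range_succ, Nat.factorial]

private lemma exp_up4 {x : ℝ} (h0 : 0 ≤ x) (h1 : x ≤ 1) :
    exp x ≤ 1 + x + x^2/2 + x^3/6 + (5/96)*x^4 := by
  have habs : |x| ≤ 1 := by rw [abs_of_nonneg h0]; exact h1
  have h := Real.exp_bound habs (n := 4) (by norm_num)
  rw [sum4, abs_of_nonneg h0] at h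
  have h' := (abs_le.mp h).2
  norm_num [Nat.factorial] at h'
  linarith

private lemma exp_low4 {x : ℝ} (h0 : 0 ≤ x) (h1 : x ≤ 1) :
    1 + x + x^2/2 + x^3/6 - (5/96)*x^4 ≤ exp x := by
  have habs : |x| ≤ 1 := by rw [abs_of_nonneg h0]; exact h1
  have h := Real.exp_bound habs (n := 4) (by norm_num)
  rw [sum4, abs_of_nonneg h0] at h
  have h' := (abs_le.mp h).1
  norm_num [Nat.factorial] at h'
  linarith

variable {ec a : ℝ}

private lemma core_bounds (hec1 : 0.71828 ≤ ec) (hec2 : ec ≤ 0.71829)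
    (ha0 : 0 < a) (ha : a ≤ 0.6962) :
    (a + 0.8*(ec*a^2)) * (exp a - 1 + ec*a^2) ≤ exp a ∧
    (2*a - 0.2*(ec*a^2)) * (exp a - 1 + ec*a^2) ≤ exp a := by
  have ha2 : a^2 ≤ 0.4847 := by nlinarith
  have hca : ec*a^2 ≤ 0.34816 :=
    le_trans (mul_le_mul hec2 ha2 (sq_nonneg a) (by norm_num : (0:ℝ) ≤ 0.71829)) (by norm_num)
  have hca0 : 0 ≤ ec*a^2 := by positivity
  have hea1 : 1 ≤ exp a := by
    rw [show (1:ℝ) = exp 0 by simp]; exact exp_le_exp.mpr ha0.le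
  have he45 : exp (0.45:ℝ) ≤ 1.56858 := by
    have := exp_up4 (x := 0.45) (by norm_num) (by norm_num); linarith
  have hl45 : (1.5643:ℝ) ≤ exp 0.45 := by
    have := exp_low4 (x := 0.45) (by norm_num) (by norm_num); linarith
  have he6 : exp (0.6:ℝ) ≤ 1.82275 := by
    have := exp_up4 (x := 0.6) (by norm_num) (by norm_num); linarith
  have hl6 : (1.80925:ℝ) ≤ exp 0.6 := by
    have := exp_low4 (x := 0.6) (by norm_num) (by norm_num); linarith
  have he65 : exp (0.65:ℝ) ≤ 1.91633 := by
    have := exp_up4 (x := 0.65) (by norm_num) (by norm_num); linarith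
  have hl65 : (1.89772:ℝ) ≤ exp 0.65 := by
    have := exp_low4 (x := 0.65) (by norm_num) (by norm_num); linarith
  have he7 : exp (0.7:ℝ) ≤ 2.01468 := by
    have := exp_up4 (x := 0.7) (by norm_num) (by norm_num); linarith
  have hpos2 : (0:ℝ) ≤ exp a - 1 + ec*a^2 := by linarith
  constructor
  · rcases le_total a 0.45 with hc | hc
    · have he : exp a ≤ 1.56858 := le_trans (exp_le_exp.mpr hc) he45
      have ha2' : a^2 ≤ 0.2025 := by nlinarith
      have hca' : ec*a^2 ≤ 0.14546 :=
        le_trans (mul_le_mul hec2 ha2' (sq_nonneg a) (by norm_num : (0:ℝ) ≤ 0.71829)) (by norm_num)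
      have h1 : a + 0.8*(ec*a^2) ≤ 0.56637 := by linarith
      have h2 : exp a - 1 + ec*a^2 ≤ 0.71404 := by linarith
      have hprod := mul_le_mul h1 h2 hpos2 (by norm_num : (0:ℝ) ≤ 0.56637)
      have hprod2 := le_trans hprod (by norm_num : _ ≤ (1:ℝ))
      linarith [hprod2]
    · have he : exp a ≤ 2.01468 := le_trans (exp_le_exp.mpr (by linarith)) he7
      have hel : (1.5643:ℝ) ≤ exp a := le_trans hl45 (exp_le_exp.mpr hc)
      have h1 : a + 0.8*(ec*a^2) ≤ 0.9748 := by linarith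
      have h2 : exp a - 1 + ec*a^2 ≤ 1.36284 := by linarith
      have hprod := mul_le_mul h1 h2 hpos2 (by norm_num : (0:ℝ) ≤ 0.9748)
      have hprod2 := le_trans hprod (by norm_num : _ ≤ (1.3286:ℝ))
      linarith [hprod2]
  · have hb1pos : 0 ≤ 2*a - 0.2*(ec*a^2) := by nlinarith
    rcases le_total a 0.45 with hc | hc
    · have he : exp a ≤ 1.56858 := le_trans (exp_le_exp.mpr hc) he45
      have ha2' : a^2 ≤ 0.2025 := by nlinarith
      have hca' : ec*a^2 ≤ 0.14546 :=
        le_trans (mul_le_mul hec2 ha2' (sq_nonneg a) (by norm_num : (0:ℝ) ≤ 0.71829)) (by norm_num)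
      have h1 : 2*a - 0.2*(ec*a^2) ≤ 0.9 := by linarith
      have h2 : exp a - 1 + ec*a^2 ≤ 0.71404 := by linarith
      have hprod := mul_le_mul h1 h2 hpos2 (by norm_num : (0:ℝ) ≤ 0.9)
      have hprod2 := le_trans hprod (by norm_num : _ ≤ (1:ℝ))
      linarith [hprod2]
    rcases le_total a 0.6 with hc2 | hc2
    · have he : exp a ≤ 1.82275 := le_trans (exp_le_exp.mpr hc2) he6
      have hel : (1.5643:ℝ) ≤ exp a := le_trans hl45 (exp_le_exp.mpr hc)
      have ha2' : a^2 ≤ 0.36 := by nlinarith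
      have hca' : ec*a^2 ≤ 0.25859 :=
        le_trans (mul_le_mul hec2 ha2' (sq_nonneg a) (by norm_num : (0:ℝ) ≤ 0.71829)) (by norm_num)
      have h1 : 2*a - 0.2*(ec*a^2) ≤ 1.2 := by linarith
      have h2 : exp a - 1 + ec*a^2 ≤ 1.08134 := by linarith
      have hprod := mul_le_mul h1 h2 hpos2 (by norm_num : (0:ℝ) ≤ 1.2)
      have hprod2 := le_trans hprod (by norm_num : _ ≤ (1.2977:ℝ))
      linarith [hprod2]
    rcases le_total a 0.65 with hc3 | hc3
    · have he : exp a ≤ 1.91633 := le_trans (exp_le_exp.mpr hc3) he65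
      have hel : (1.80925:ℝ) ≤ exp a := le_trans hl6 (exp_le_exp.mpr hc2)
      have ha2l : (0.36:ℝ) ≤ a^2 := by nlinarith
      have ha2' : a^2 ≤ 0.4225 := by nlinarith
      have hcaL : (0.258580:ℝ) ≤ ec*a^2 :=
        le_trans (by norm_num) (mul_le_mul hec1 ha2l (by norm_num : (0:ℝ) ≤ 0.36) (by linarith : (0:ℝ) ≤ ec))
      have hca' : ec*a^2 ≤ 0.30348 :=
        le_trans (mul_le_mul hec2 ha2' (sq_nonneg a) (by norm_num : (0:ℝ) ≤ 0.71829)) (by norm_num)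
      have h1 : 2*a - 0.2*(ec*a^2) ≤ 1.24829 := by linarith
      have h2 : exp a - 1 + ec*a^2 ≤ 1.21981 := by linarith
      have hprod := mul_le_mul h1 h2 hpos2 (by norm_num : (0:ℝ) ≤ 1.24829)
      have hprod2 := le_trans hprod (by norm_num : _ ≤ (1.5227:ℝ))
      linarith [hprod2]
    · have he : exp a ≤ 2.01468 := le_trans (exp_le_exp.mpr (by linarith)) he7
      have hel : (1.89772:ℝ) ≤ exp a := le_trans hl65 (exp_le_exp.mpr hc3)
      have ha2l : (0.4225:ℝ) ≤ a^2 := by nlinarith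
      have hcaL : (0.303472:ℝ) ≤ ec*a^2 :=
        le_trans (by norm_num) (mul_le_mul hec1 ha2l (by norm_num : (0:ℝ) ≤ 0.4225) (by linarith : (0:ℝ) ≤ ec))
      have h1 : 2*a - 0.2*(ec*a^2) ≤ 1.33172 := by linarith
      have h2 : exp a - 1 + ec*a^2 ≤ 1.36284 := by linarith
      have hprod := mul_le_mul h1 h2 hpos2 (by norm_num : (0:ℝ) ≤ 1.33172)
      have hprod2 := le_trans hprod (by norm_num : _ ≤ (1.815:ℝ))
      linarith [hprod2]

end NumericAux


section PathsAux

variable {S : Type*} [MeasurableSpace S] [MeasurableSingletonClass S] [Countable S]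

/-- product of transition weights along a finite path -/
def wt (C : Chain S) {T : ℕ} (s : Fin (T+1) → S) : ℝ≥0∞ :=
  ∏ k : Fin T, C.trans (s k.castSucc) (s k.succ)

/-- number of indices `1 ≤ k ≤ T` where the path is in `B` -/
def cntB {C : Chain S} (L : LyapunovData C) {T : ℕ} (s : Fin (T+1) → S) : ℕ :=
  ∑ k : Fin (T+1), if k ≠ 0 ∧ s k ∈ L.B then 1 else 0

/-- total weight of length-`T` paths from `x` with fewer than `m` visits to `B` -/
def NN (C : Chain S) (L : LyapunovData C) (x : S) (m T : ℕ) : ℝ≥0∞ :=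
  ∑' s : Fin (T+1) → S, if s 0 = x ∧ cntB L s < m then wt C s else 0

lemma NN_zero (C : Chain S) (L : LyapunovData C) (x : S) (T : ℕ) :
    NN C L x 0 T = 0 := by
  simp [NN]

lemma NN_base (C : Chain S) (L : LyapunovData C) (x : S) (m : ℕ) :
    NN C L x (m+1) 0 = 1 := by
  rw [NN]
  have h1 : ∀ s : Fin 1 → S, cntB L s = 0 := by
    intro s
    rw [cntB]
    apply Finset.sum_eq_zero
    intro k _
    have : k = 0 := Fin.ext (by omega)
    simp [this]
  have h2 : ∀ s : Fin 1 → S, wt C s = 1 := by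
    intro s; rw [wt]; simp
  have : ∀ s : Fin 1 → S,
      (if s 0 = x ∧ cntB L s < m + 1 then wt C s else 0) = (if s 0 = x then 1 else 0) := by
    intro s; simp [h1, h2]
  rw [tsum_congr this]
  rw [← (Equiv.funUnique (Fin 1) S).symm.tsum_eq (fun s : Fin 1 → S => if s 0 = x then 1 else 0)]
  simp only [Equiv.funUnique_symm_apply]
  exact tsum_ite_eq x 1

lemma wt_cons (C : Chain S) {T : ℕ} (y : S) (t : Fin (T+1) → S) :
    wt C (Fin.cons y t) = C.trans y (t 0) * wt C t := by
  rw [wt, Fin.prod_univ_succ]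
  have h0 : C.trans ((Fin.cons y t : Fin (T+2) → S) (Fin.castSucc 0))
      ((Fin.cons y t : Fin (T+2) → S) (Fin.succ 0)) = C.trans y (t 0) := by
    rw [Fin.castSucc_zero, Fin.cons_zero, Fin.cons_succ]
  rw [h0, wt]
  refine congrArg _ (Finset.prod_congr rfl fun k _ => ?_)
  rw [← Fin.succ_castSucc, Fin.cons_succ, Fin.cons_succ]

lemma cntB_cons {C : Chain S} (L : LyapunovData C) {T : ℕ} (y : S) (t : Fin (T+1) → S) :
    cntB L (Fin.cons y t) = (if t 0 ∈ L.B then 1 else 0) + cntB L t := by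
  rw [cntB, Fin.sum_univ_succ]
  simp only [ne_eq, not_true_eq_false, false_and, if_false, Fin.succ_ne_zero, not_false_eq_true,
    true_and, Fin.cons_succ, Fin.cons_zero, zero_add]
  rw [Fin.sum_univ_succ, cntB, Fin.sum_univ_succ]
  simp [Fin.succ_ne_zero]

lemma NN_succ (C : Chain S) (L : LyapunovData C) (x : S) (m T : ℕ) :
    NN C L x (m+1) (T+1)
      = ∑' y, C.trans x y * NN C L y (if y ∈ L.B then m else m+1) T := by
  have hrhs : ∀ y, C.trans x y * NN C L y (if y ∈ L.B then m else m+1) T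
      = ∑' t : Fin (T+1) → S, if t 0 = y then
          (if cntB L t < (if t 0 ∈ L.B then m else m+1) then C.trans x (t 0) * wt C t else 0)
          else 0 := by
    intro y
    rw [NN, ← ENNReal.tsum_mul_left]
    congr 1; funext t
    by_cases h : t 0 = y
    · rw [← h]; by_cases hb : cntB L t < (if t 0 ∈ L.B then m else m+1) <;> simp [hb]
    · rw [if_neg h, if_neg (fun hh => h hh.1), mul_zero]
  rw [tsum_congr hrhs, ENNReal.tsum_comm]
  have hinner : ∀ t : Fin (T+1) → S,
      (∑' y, if t 0 = y then
        (if cntB L t < (if t 0 ∈ L.B then m else m+1) then C.trans x (t 0) * wt C t else 0) else 0)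
      = (if cntB L t < (if t 0 ∈ L.B then m else m+1) then C.trans x (t 0) * wt C t else 0) := by
    intro t
    rw [tsum_eq_single (t 0)]
    · simp
    · intro y hy; rw [if_neg (fun h => hy h.symm)]
  rw [tsum_congr hinner]
  -- now the LHS
  rw [NN, ← (Fin.consEquiv (fun _ : Fin (T+2) => S)).tsum_eq, ENNReal.tsum_prod']
  have houter : ∀ y : S, (∑' t : Fin (T+1) → S,
      if (Fin.cons y t : Fin (T+2) → S) 0 = x ∧ cntB L (Fin.cons y t) < m + 1
      then wt C (Fin.cons y t) else 0)
      = if y = x then (∑' t : Fin (T+1) → S,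
          if cntB L t < (if t 0 ∈ L.B then m else m+1) then C.trans x (t 0) * wt C t else 0)
        else 0 := by
    intro y
    by_cases hy : y = x
    · subst hy
      rw [if_pos rfl]
      congr 1; funext t
      rw [Fin.cons_zero, wt_cons, cntB_cons]
      have hcond : ((if t 0 ∈ L.B then 1 else 0) + cntB L t < m + 1)
          ↔ (cntB L t < (if t 0 ∈ L.B then m else m+1)) := by
        by_cases hb : t 0 ∈ L.B <;> simp [hb] <;> omega
      by_cases hc : cntB L t < (if t 0 ∈ L.B then m else m+1)
      · rw [if_pos ⟨rfl, hcond.mpr hc⟩, if_pos hc]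
      · rw [if_neg (fun hh => hc (hcond.mp hh.2)), if_neg hc]
    · rw [if_neg hy]
      apply ENNReal.tsum_eq_zero.mpr
      intro t
      rw [Fin.cons_zero]
      exact if_neg (fun hh => hy hh.1)
  have : ∀ y : S, (∑' t : Fin (T+1) → S,
      if (Fin.consEquiv (fun _ : Fin (T+2) => S)) (y, t) 0 = x ∧
          cntB L ((Fin.consEquiv (fun _ : Fin (T+2) => S)) (y, t)) < m + 1
      then wt C ((Fin.consEquiv (fun _ : Fin (T+2) => S)) (y, t)) else 0)
      = if y = x then (∑' t : Fin (T+1) → S,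
          if cntB L t < (if t 0 ∈ L.B then m else m+1) then C.trans x (t 0) * wt C t else 0)
        else 0 := by
    intro y
    rw [← houter y]
    rfl
  rw [tsum_congr this, tsum_eq_single x (by intro y hy; rw [if_neg hy])]
  rw [if_pos rfl]

end PathsAux


section BridgeAux

variable {S : Type*} [MeasurableSpace S] [MeasurableSingletonClass S] [Countable S]

lemma cyl_meas (C : Chain S) (x : S) (n : ℕ) (s : ℕ → S) :
    C.μ x {f | ∀ k ≤ n, f k = s k}
      = (if s 0 = x then 1 else 0) * ∏ k ∈ Finset.range n, C.trans (s k) (s (k+1)) := by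
  induction n with
  | zero =>
    have hset : {f : ℕ → S | ∀ k ≤ 0, f k = s k} = {f : ℕ → S | f 0 = s 0} := by
      ext f
      constructor
      · intro h; exact h 0 le_rfl
      · intro h k hk; rw [Nat.le_zero.mp hk]; exact h
    rw [hset]
    simp only [Finset.range_zero, Finset.prod_empty, mul_one]
    by_cases h : s 0 = x
    · rw [if_pos h, h]; exact C.start x
    · rw [if_neg h]
      haveI := C.isProb x
      have hmeas : MeasurableSet {f : ℕ → S | f 0 = x} := by
        have he : {f : ℕ → S | f 0 = x} = (fun f : ℕ → S => f 0) ⁻¹' {x} := rfl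
        rw [he]
        exact (measurable_pi_apply 0) (measurableSet_singleton x)
      have hsub : {f : ℕ → S | f 0 = s 0} ⊆ {f : ℕ → S | f 0 = x}ᶜ := by
        intro f hf hfx
        exact h ((hf : f 0 = s 0).symm.trans hfx)
      have hc : C.μ x {f : ℕ → S | f 0 = x}ᶜ = 0 := by
        rw [prob_compl_eq_one_sub hmeas, C.start x]; simp
      exact measure_mono_null hsub hc
  | succ n ih =>
    rw [C.markov x n s, ih, Finset.prod_range_succ, mul_assoc]

/-- finite cylinder set -/
def cylF {S : Type*} {T : ℕ} (s : Fin (T+1) → S) : Set (ℕ → S) :=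
  {f | ∀ k : Fin (T+1), f k = s k}

lemma cylF_meas {T : ℕ} (s : Fin (T+1) → S) : MeasurableSet (cylF s) := by
  have he : cylF s = ⋂ k : Fin (T+1), (fun f : ℕ → S => f (k : ℕ)) ⁻¹' {s k} := by
    ext f; simp [cylF, Set.mem_iInter]
  rw [he]
  exact MeasurableSet.iInter fun k => (measurable_pi_apply _) (measurableSet_singleton _)

lemma cylF_measure (C : Chain S) (x : S) {T : ℕ} (s : Fin (T+1) → S) :
    C.μ x (cylF s) = if s 0 = x then wt C s else 0 := by
  classical
  set e : ℕ → S := fun k => if h : k < T+1 then s ⟨k, h⟩ else s 0 with he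
  have hset : cylF s = {f | ∀ k ≤ T, f k = e k} := by
    ext f
    constructor
    · intro hf k hk
      have hlt : k < T+1 := Nat.lt_succ_of_le hk
      have := hf ⟨k, hlt⟩
      rw [he]; simp only [hlt, dif_pos]
      exact this
    · intro hf k
      have hk : (k : ℕ) ≤ T := Nat.lt_succ_iff.mp k.isLt
      have := hf k hk
      rw [he] at this
      simp only [k.isLt, dif_pos] at this
      rw [show (⟨(k : ℕ), k.isLt⟩ : Fin (T+1)) = k from Fin.ext rfl] at this
      exact this
  have he0 : e 0 = s 0 := by
    rw [he]; simp only [Nat.succ_pos, dif_pos]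
    exact congrArg s (Fin.ext rfl)
  have hprod : ∏ k ∈ Finset.range T, C.trans (e k) (e (k+1)) = wt C s := by
    rw [← Fin.prod_univ_eq_prod_range (fun k => C.trans (e k) (e (k+1))) T, wt]
    apply Finset.prod_congr rfl
    intro k _
    have h1 : e (k : ℕ) = s k.castSucc := by
      have hlt : (k : ℕ) < T + 1 := Nat.lt_succ_of_lt k.isLt
      rw [he]; simp only [hlt, dif_pos]
      exact congrArg s (Fin.ext rfl)
    have h2 : e ((k : ℕ)+1) = s k.succ := by
      have hlt : (k : ℕ) + 1 < T + 1 := Nat.succ_lt_succ k.isLt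
      rw [he]; simp only [hlt, dif_pos]
      exact congrArg s (Fin.ext rfl)
    rw [h1, h2]
  rw [hset, cyl_meas C x T e, he0, hprod]
  by_cases h : s 0 = x
  · rw [if_pos h, if_pos h, one_mul]
  · rw [if_neg h, if_neg h, zero_mul]

lemma bridge (C : Chain S) (x : S) (T : ℕ) (p : (Fin (T+1) → S) → Prop) :
    C.μ x {f | p (fun k : Fin (T+1) => f (k : ℕ))}
      = ∑' s : Fin (T+1) → S, if s 0 = x ∧ p s then wt C s else 0 := by
  classical
  set D : (Fin (T+1) → S) → Set (ℕ → S) := fun s => if p s then cylF s else ∅ with hD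
  have hunion : {f : ℕ → S | p (fun k : Fin (T+1) => f (k : ℕ))} = ⋃ s, D s := by
    ext f
    constructor
    · intro hf
      refine Set.mem_iUnion.mpr ⟨fun k : Fin (T+1) => f (k : ℕ), ?_⟩
      simp only [hD, if_pos (show p _ from hf)]
      exact fun k => rfl
    · intro hf
      obtain ⟨s, hs⟩ := Set.mem_iUnion.mp hf
      simp only [hD] at hs
      by_cases hp : p s
      · rw [if_pos hp] at hs
        have heq : (fun k : Fin (T+1) => f (k : ℕ)) = s := funext fun k => hs k
        show p fun k : Fin (T+1) => f (k : ℕ)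
        rw [heq]
        exact hp
      · rw [if_neg hp] at hs
        exact absurd hs (Set.notMem_empty f)
  have hdisj : Pairwise (Function.onFun Disjoint D) := by
    intro s s' hne
    simp only [Function.onFun, hD]
    by_cases hp : p s
    · by_cases hp' : p s'
      · rw [if_pos hp, if_pos hp']
        rw [Set.disjoint_left]
        intro f hf hf'
        exact hne (funext fun k => ((hf k).symm.trans (hf' k)))
      · rw [if_neg hp']; exact disjoint_empty _
    · rw [if_neg hp]; exact empty_disjoint _
  have hmeas : ∀ s, MeasurableSet (D s) := by
    intro s
    simp only [hD]
    by_cases hp : p s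
    · rw [if_pos hp]; exact cylF_meas s
    · rw [if_neg hp]; exact MeasurableSet.empty
  rw [hunion, measure_iUnion hdisj hmeas]
  apply tsum_congr
  intro s
  simp only [hD]
  by_cases hp : p s
  · rw [if_pos hp, cylF_measure C x s]
    by_cases hx : s 0 = x
    · rw [if_pos hx, if_pos ⟨hx, hp⟩]
    · rw [if_neg hx, if_neg (fun hh => hx hh.1)]
  · rw [if_neg hp, if_neg (fun hh => hp hh.2)]
    exact measure_empty

end BridgeAux


section DriftAux

variable {S : Type*} [MeasurableSpace S] [MeasurableSingletonClass S] [Countable S]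

private lemma sum3 (x : ℝ) : ∑ m ∈ Finset.range 3, x ^ m / (Nat.factorial m : ℝ)
    = 1 + x + x^2/2 := by
  norm_num [Finset.sum_range_succ, Nat.factorial]

private lemma exp_quad {z a : ℝ} (hz : |z| ≤ a) (ha : a ≤ 0.6962) :
    Real.exp z ≤ 1 + z + (Real.exp 1 - 2) * z^2 := by
  have ha1 : |z| ≤ 1 := le_trans hz (le_trans ha (by norm_num))
  have h := Real.exp_bound ha1 (n := 3) (by norm_num)
  rw [sum3] at h
  have h' := (abs_le.mp h).2
  norm_num [Nat.factorial] at h'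
  have hz3 : |z|^3 ≤ a * z^2 := by
    have : |z|^3 = |z| * z^2 := by
      rw [pow_succ, sq_abs]; ring
    rw [this]
    apply mul_le_mul_of_nonneg_right hz (sq_nonneg z)
  have hec : (0.71828:ℝ) ≤ Real.exp 1 - 2 := by
    have := Real.exp_one_gt_d9; linarith
  nlinarith [sq_nonneg z]

lemma drift_step {C : Chain S} (L : LyapunovData C)
    (ha : L.eta * L.nuMax ≤ 0.6962) {x : S} (hx : L.b < L.V x) :
    ∑' y, C.trans x y * ENNReal.ofReal (Real.exp (L.eta * L.V y))
      ≤ ENNReal.ofReal (L.rho * Real.exp (L.eta * L.V x)) := by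
  classical
  have hec : (0:ℝ) < Real.exp 1 - 2 := by
    have := Real.exp_one_gt_d9; linarith
  have hν : 0 < L.nuMax := L.nuMax_pos
  have hγ : 0 < L.gam := L.gam_pos
  have hη : 0 < L.eta := by
    rw [LyapunovData.eta]; positivity
  set η := L.eta with hηdef
  set ν := L.nuMax
  set γ := L.gam
  set r : S → ℝ := fun y => (C.trans x y).toReal with hr
  have hrtop : ∀ y, C.trans x y ≠ ⊤ := by
    intro y
    exact ne_top_of_le_ne_top (by simp) (le_of_le_of_eq (ENNReal.le_tsum y) (C.trans_sum x))
  have hrs : Summable r := ENNReal.summable_toReal (by rw [C.trans_sum x]; simp)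
  have hr1 : ∑' y, r y = 1 := by
    rw [hr, ← ENNReal.tsum_toReal_eq hrtop, C.trans_sum x]; simp
  have hr0 : ∀ y, 0 ≤ r y := fun y => ENNReal.toReal_nonneg
  have hjump : ∀ y, r y ≠ 0 → |L.V y - L.V x| ≤ ν := by
    intro y hy
    apply L.bounded_jump
    intro h0
    apply hy
    rw [hr]; simp only [h0, ENNReal.toReal_zero]
  set Δ : S → ℝ := fun y => L.V y - L.V x with hΔ
  have hsum_d : Summable (fun y => r y * Δ y) := by
    apply Summable.of_abs
    apply Summable.of_nonneg_of_le (fun y => abs_nonneg _) _ (hrs.mul_left ν)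
    intro y
    by_cases hy : r y = 0
    · simp [hy]
    · rw [abs_mul, abs_of_nonneg (hr0 y)]
      calc r y * |Δ y| ≤ r y * ν := mul_le_mul_of_nonneg_left (hjump y hy) (hr0 y)
      _ = ν * r y := mul_comm _ _
  have hsum_d2 : Summable (fun y => r y * (Δ y)^2) := by
    apply Summable.of_nonneg_of_le (fun y => mul_nonneg (hr0 y) (sq_nonneg _))
      _ ((hrs.mul_left (ν^2)))
    intro y
    by_cases hy : r y = 0
    · simp [hy]
    · have h1 : (Δ y)^2 ≤ ν^2 := by
        have := hjump y hy
        nlinarith [abs_nonneg (Δ y), le_abs_self (Δ y), neg_abs_le (Δ y)]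
      calc r y * (Δ y)^2 ≤ r y * ν^2 := mul_le_mul_of_nonneg_left h1 (hr0 y)
      _ = ν^2 * r y := mul_comm _ _
  have hsum_e : Summable (fun y => r y * Real.exp (η * Δ y)) := by
    apply Summable.of_nonneg_of_le
      (fun y => mul_nonneg (hr0 y) (Real.exp_nonneg _)) _ (hrs.mul_left (Real.exp (η*ν)))
    intro y
    by_cases hy : r y = 0
    · simp [hy]
    · have : Real.exp (η * Δ y) ≤ Real.exp (η * ν) := by
        apply Real.exp_le_exp.mpr
        calc η * Δ y ≤ η * |Δ y| := mul_le_mul_of_nonneg_left (le_abs_self _) hη.le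
        _ ≤ η * ν := mul_le_mul_of_nonneg_left (hjump y hy) hη.le
      calc r y * Real.exp (η * Δ y) ≤ r y * Real.exp (η*ν) :=
            mul_le_mul_of_nonneg_left this (hr0 y)
      _ = Real.exp (η*ν) * r y := mul_comm _ _
  have hpt : ∀ y, r y * Real.exp (η * Δ y)
      ≤ r y + η * (r y * Δ y) + ((Real.exp 1 - 2) * η^2) * (r y * (Δ y)^2) := by
    intro y
    by_cases hy : r y = 0
    · simp [hy]
    · have hzb : |η * Δ y| ≤ η * ν := by
        rw [abs_mul, abs_of_nonneg hη.le]
        exact mul_le_mul_of_nonneg_left (hjump y hy) hη.le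
      have := exp_quad (le_trans hzb ha) (le_refl (0.6962:ℝ))
      have h2 : Real.exp (η * Δ y) ≤ 1 + η * Δ y + (Real.exp 1 - 2) * (η * Δ y)^2 :=
        exp_quad (a := 0.6962) (le_trans hzb (le_trans ha (le_refl _))) (le_refl _)
      calc r y * Real.exp (η * Δ y)
          ≤ r y * (1 + η * Δ y + (Real.exp 1 - 2) * (η * Δ y)^2) :=
            mul_le_mul_of_nonneg_left h2 (hr0 y)
      _ = r y + η * (r y * Δ y) + ((Real.exp 1 - 2) * η^2) * (r y * (Δ y)^2) := by ring
  have hdrift := L.drift x hx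
  have htsum_d : ∑' y, r y * Δ y ≤ -γ := le_of_lt hdrift
  have htsum_d2 : ∑' y, r y * (Δ y)^2 ≤ ν^2 := by
    calc ∑' y, r y * (Δ y)^2 ≤ ∑' y, ν^2 * r y := by
          apply Summable.tsum_le_tsum _ hsum_d2 (hrs.mul_left _)
          intro y
          by_cases hy : r y = 0
          · simp [hy]
          · have h1 : (Δ y)^2 ≤ ν^2 := by
              have := hjump y hy
              nlinarith [abs_nonneg (Δ y), le_abs_self (Δ y), neg_abs_le (Δ y)]
            calc r y * (Δ y)^2 ≤ r y * ν^2 := mul_le_mul_of_nonneg_left h1 (hr0 y)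
            _ = ν^2 * r y := mul_comm _ _
    _ = ν^2 := by rw [tsum_mul_left, hr1, mul_one]
  have hmain : ∑' y, r y * Real.exp (η * Δ y) ≤ L.rho := by
    have h1 : ∑' y, r y * Real.exp (η * Δ y)
        ≤ ∑' y, (r y + η * (r y * Δ y) + ((Real.exp 1 - 2) * η^2) * (r y * (Δ y)^2)) := by
      apply Summable.tsum_le_tsum hpt hsum_e
      exact (hrs.add (hsum_d.mul_left η)).add (hsum_d2.mul_left _)
    rw [Summable.tsum_add (hrs.add (hsum_d.mul_left η)) (hsum_d2.mul_left _),
        Summable.tsum_add hrs (hsum_d.mul_left η), hr1, tsum_mul_left, tsum_mul_left] at h1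
    have h2 : η * ∑' y, r y * Δ y ≤ η * (-γ) :=
      mul_le_mul_of_nonneg_left htsum_d hη.le
    have h3 : ((Real.exp 1 - 2) * η^2) * ∑' y, r y * (Δ y)^2
        ≤ ((Real.exp 1 - 2) * η^2) * ν^2 :=
      mul_le_mul_of_nonneg_left htsum_d2 (by positivity)
    have hval : 1 + η * (-γ) + ((Real.exp 1 - 2) * η^2) * ν^2 = L.rho := by
      rw [hηdef, LyapunovData.eta, LyapunovData.rho]
      simp only [γ, ν]
      field_simp
      ring
    linarith
  -- lift to ENNReal
  have hterm : ∀ y, C.trans x y * ENNReal.ofReal (Real.exp (η * L.V y))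
      = ENNReal.ofReal (r y * Real.exp (η * L.V y)) := by
    intro y
    rw [ENNReal.ofReal_mul (hr0 y), ENNReal.ofReal_toReal (hrtop y)]
  rw [tsum_congr hterm]
  have hsum_V : Summable (fun y => r y * Real.exp (η * L.V y)) := by
    have : (fun y => r y * Real.exp (η * L.V y))
        = fun y => (r y * Real.exp (η * Δ y)) * Real.exp (η * L.V x) := by
      funext y
      rw [mul_assoc, ← Real.exp_add]
      congr 2
      rw [hΔ]; ring
    rw [this]
    exact hsum_e.mul_right _
  rw [← ENNReal.ofReal_tsum_of_nonneg
    (fun y => mul_nonneg (hr0 y) (Real.exp_nonneg _)) hsum_V]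
  apply ENNReal.ofReal_le_ofReal
  have heq : ∑' y, r y * Real.exp (η * L.V y)
      = (∑' y, r y * Real.exp (η * Δ y)) * Real.exp (η * L.V x) := by
    rw [← tsum_mul_right]
    apply tsum_congr
    intro y
    rw [mul_assoc, ← Real.exp_add]
    congr 2
    rw [hΔ]; ring
  rw [heq]
  exact mul_le_mul_of_nonneg_right hmain (Real.exp_nonneg _)

lemma gam_lt_nu {C : Chain S} (L : LyapunovData C) {x : S} (hx : L.b < L.V x) :
    L.gam < L.nuMax := by
  classical
  set r : S → ℝ := fun y => (C.trans x y).toReal with hr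
  have hrtop : ∀ y, C.trans x y ≠ ⊤ := by
    intro y
    exact ne_top_of_le_ne_top (by simp) (le_of_le_of_eq (ENNReal.le_tsum y) (C.trans_sum x))
  have hrs : Summable r := ENNReal.summable_toReal (by rw [C.trans_sum x]; simp)
  have hr1 : ∑' y, r y = 1 := by
    rw [hr, ← ENNReal.tsum_toReal_eq hrtop, C.trans_sum x]; simp
  have hr0 : ∀ y, 0 ≤ r y := fun y => ENNReal.toReal_nonneg
  have hjump : ∀ y, r y ≠ 0 → |L.V y - L.V x| ≤ L.nuMax := by
    intro y hy
    apply L.bounded_jump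
    intro h0
    apply hy
    rw [hr]; simp only [h0, ENNReal.toReal_zero]
  have hsum_d : Summable (fun y => r y * (L.V y - L.V x)) := by
    apply Summable.of_abs
    apply Summable.of_nonneg_of_le (fun y => abs_nonneg _) _ (hrs.mul_left L.nuMax)
    intro y
    by_cases hy : r y = 0
    · simp [hy]
    · rw [abs_mul, abs_of_nonneg (hr0 y)]
      calc r y * |L.V y - L.V x| ≤ r y * L.nuMax :=
            mul_le_mul_of_nonneg_left (hjump y hy) (hr0 y)
      _ = L.nuMax * r y := mul_comm _ _
  have hdrift := L.drift x hx
  have hlow : -L.nuMax ≤ ∑' y, r y * (L.V y - L.V x) := by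
    have heq : -L.nuMax = ∑' y, (-L.nuMax) * r y := by
      rw [tsum_mul_left, hr1, mul_one]
    rw [heq]
    apply Summable.tsum_le_tsum _ (hrs.mul_left _) hsum_d
    intro y
    by_cases hy : r y = 0
    · simp [hy]
    · have h1 : -L.nuMax ≤ L.V y - L.V x := (abs_le.mp (hjump y hy)).1
      calc (-L.nuMax) * r y ≤ (L.V y - L.V x) * r y :=
            mul_le_mul_of_nonneg_right h1 (hr0 y)
      _ = r y * (L.V y - L.V x) := mul_comm _ _
  linarith

end DriftAux


section StepAux

variable {S : Type*} [MeasurableSpace S] [MeasurableSingletonClass S] [Countable S]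

lemma tsum_trans_const (C : Chain S) (x : S) (c : ℝ≥0∞) :
    ∑' y, C.trans x y * c = c := by
  rw [ENNReal.tsum_mul_right, C.trans_sum x, one_mul]

lemma stepB {C : Chain S} (L : LyapunovData C) (hη : 0 ≤ L.eta)
    {x : S} (hx : x ∈ L.B) (q : ℝ) (hq : 0 ≤ q) :
    ∑' y, C.trans x y * ENNReal.ofReal
        (if y ∈ L.B then Real.exp (L.eta * L.nuMax - q)
         else Real.exp (L.eta * (L.V y - L.b)))
      ≤ ENNReal.ofReal (Real.exp (L.eta * L.nuMax)) := by
  calc ∑' y, C.trans x y * ENNReal.ofReal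
        (if y ∈ L.B then Real.exp (L.eta * L.nuMax - q)
         else Real.exp (L.eta * (L.V y - L.b)))
      ≤ ∑' y, C.trans x y * ENNReal.ofReal (Real.exp (L.eta * L.nuMax)) := by
        apply ENNReal.tsum_le_tsum
        intro y
        by_cases h0 : C.trans x y = 0
        · simp [h0]
        · apply mul_le_mul_right
          apply ENNReal.ofReal_le_ofReal
          by_cases hyB : y ∈ L.B
          · rw [if_pos hyB]
            exact Real.exp_le_exp.mpr (by linarith)
          · rw [if_neg hyB]
            apply Real.exp_le_exp.mpr
            have hj := abs_le.mp (L.bounded_jump x y h0)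
            have hVx : L.V x ≤ L.b := hx
            have h1 : L.V y - L.b ≤ L.nuMax := by linarith [hj.2]
            exact mul_le_mul_of_nonneg_left h1 hη
    _ = _ := tsum_trans_const C x _

lemma stepOut {C : Chain S} (L : LyapunovData C) (hη : 0 ≤ L.eta)
    (ha : L.eta * L.nuMax ≤ 0.6962) (hρ : 0 ≤ L.rho)
    {x : S} (hx : x ∉ L.B) (q : ℝ) :
    ∑' y, C.trans x y * ENNReal.ofReal
        (if y ∈ L.B then Real.exp (L.eta * L.nuMax - q)
         else Real.exp (L.eta * (L.V y - L.b)))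
      ≤ ENNReal.ofReal ((max (Real.exp (2*(L.eta*L.nuMax) - q)) 1)
          * (L.rho * Real.exp (L.eta * (L.V x - L.b)))) := by
  have hxV : L.b < L.V x := lt_of_not_ge hx
  set K := max (Real.exp (2*(L.eta*L.nuMax) - q)) 1 with hK
  have hK0 : (0:ℝ) ≤ K := le_trans zero_le_one (le_max_right _ _)
  calc ∑' y, C.trans x y * ENNReal.ofReal
        (if y ∈ L.B then Real.exp (L.eta * L.nuMax - q)
         else Real.exp (L.eta * (L.V y - L.b)))
      ≤ ∑' y, C.trans x y * ENNReal.ofReal (K * Real.exp (L.eta * (L.V y - L.b))) := by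
        apply ENNReal.tsum_le_tsum
        intro y
        by_cases h0 : C.trans x y = 0
        · simp [h0]
        apply mul_le_mul_right
        apply ENNReal.ofReal_le_ofReal
        by_cases hyB : y ∈ L.B
        · rw [if_pos hyB]
          have hj := abs_le.mp (L.bounded_jump x y h0)
          have h1 : -(L.eta * L.nuMax) ≤ L.eta * (L.V y - L.b) := by
            have h2 : -(L.nuMax) ≤ L.V y - L.b := by linarith [hj.1]
            calc -(L.eta * L.nuMax) = L.eta * (-(L.nuMax)) := by ring
            _ ≤ L.eta * (L.V y - L.b) := mul_le_mul_of_nonneg_left h2 hη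
          calc Real.exp (L.eta * L.nuMax - q)
              = Real.exp (2*(L.eta*L.nuMax) - q) * Real.exp (-(L.eta*L.nuMax)) := by
                rw [← Real.exp_add]; ring_nf
          _ ≤ Real.exp (2*(L.eta*L.nuMax) - q) * Real.exp (L.eta * (L.V y - L.b)) :=
                mul_le_mul_of_nonneg_left (Real.exp_le_exp.mpr h1) (Real.exp_nonneg _)
          _ ≤ K * Real.exp (L.eta * (L.V y - L.b)) :=
                mul_le_mul_of_nonneg_right (le_max_left _ _) (Real.exp_nonneg _)
        · rw [if_neg hyB]
          nth_rewrite 1 [show Real.exp (L.eta * (L.V y - L.b))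
              = 1 * Real.exp (L.eta * (L.V y - L.b)) from (one_mul _).symm]
          exact mul_le_mul_of_nonneg_right (le_max_right _ _) (Real.exp_nonneg _)
    _ = ENNReal.ofReal (K * Real.exp (-(L.eta * L.b)))
          * ∑' y, C.trans x y * ENNReal.ofReal (Real.exp (L.eta * L.V y)) := by
        rw [← ENNReal.tsum_mul_left]
        apply tsum_congr; intro y
        rw [← mul_assoc, mul_comm (ENNReal.ofReal (K * Real.exp (-(L.eta * L.b)))) (C.trans x y),
          mul_assoc, ← ENNReal.ofReal_mul (by positivity)]
        congr 2
        rw [mul_assoc, ← Real.exp_add]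
        congr 2
        ring
    _ ≤ ENNReal.ofReal (K * Real.exp (-(L.eta * L.b)))
          * ENNReal.ofReal (L.rho * Real.exp (L.eta * L.V x)) :=
        mul_le_mul_right (drift_step L ha hxV) _
    _ = _ := by
        rw [← ENNReal.ofReal_mul (by positivity)]
        congr 1
        have hsplit : Real.exp (L.eta * (L.V x - L.b))
            = Real.exp (L.eta * L.V x) * Real.exp (-(L.eta * L.b)) := by
          rw [← Real.exp_add]; congr 1; ring
        rw [hsplit]; ring

end StepAux


section InvariantAux

variable {S : Type*} [MeasurableSpace S] [MeasurableSingletonClass S] [Countable S]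

lemma invariant {C : Chain S} (L : LyapunovData C)
    (hη : 0 ≤ L.eta) (ha : L.eta * L.nuMax ≤ 0.6962) (hρ : 0 ≤ L.rho)
    (q lam : ℝ) (hq : 0 ≤ q) (hlam : 0 ≤ lam)
    (hC1 : L.rho * Real.exp lam ≤ 1)
    (hC2 : L.rho * Real.exp (lam + (2*(L.eta*L.nuMax) - q)) ≤ 1) :
    ∀ T m (x : S), NN C L x m T ≤ ENNReal.ofReal
      (Real.exp (-(lam*T)) * (Real.exp (q+lam))^m *
        (if x ∈ L.B then Real.exp (L.eta*L.nuMax - q)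
         else Real.exp (L.eta*(L.V x - L.b) - q - lam))) := by
  have ha0 : 0 ≤ L.eta * L.nuMax := mul_nonneg hη L.nuMax_pos.le
  intro T
  induction T with
  | zero =>
    intro m x
    cases m with
    | zero => rw [NN_zero]; exact zero_le
    | succ m' =>
      rw [NN_base]
      simp only [Nat.cast_zero, mul_zero, neg_zero, Real.exp_zero, one_mul]
      rw [ENNReal.one_le_ofReal]
      have hMr1 : (1:ℝ) ≤ Real.exp (q+lam) := Real.one_le_exp (by linarith)
      by_cases hx : x ∈ L.B
      · rw [if_pos hx]
        have e1 : Real.exp (q+lam) * Real.exp (L.eta*L.nuMax - q)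
            = Real.exp (lam + L.eta*L.nuMax) := by
          rw [← Real.exp_add]; congr 1; ring
        calc (1:ℝ) ≤ Real.exp (lam + L.eta*L.nuMax) := Real.one_le_exp (by linarith)
        _ = Real.exp (q+lam) * Real.exp (L.eta*L.nuMax - q) := e1.symm
        _ ≤ Real.exp (q+lam)^(m'+1) * Real.exp (L.eta*L.nuMax - q) := by
            apply mul_le_mul_of_nonneg_right _ (Real.exp_nonneg _)
            calc Real.exp (q+lam) = Real.exp (q+lam)^1 := (pow_one _).symm
            _ ≤ Real.exp (q+lam)^(m'+1) := pow_le_pow_right₀ hMr1 (by omega)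
      · rw [if_neg hx]
        have hnb : ¬ L.V x ≤ L.b := hx
        have hd : 0 ≤ L.eta * (L.V x - L.b) :=
          mul_nonneg hη (by linarith [lt_of_not_ge hnb])
        have e1 : Real.exp (q+lam) * Real.exp (L.eta*(L.V x - L.b) - q - lam)
            = Real.exp (L.eta*(L.V x - L.b)) := by
          rw [← Real.exp_add]; congr 1; ring
        calc (1:ℝ) ≤ Real.exp (L.eta*(L.V x - L.b)) := Real.one_le_exp hd
        _ = Real.exp (q+lam) * Real.exp (L.eta*(L.V x - L.b) - q - lam) := e1.symm
        _ ≤ Real.exp (q+lam)^(m'+1) * Real.exp (L.eta*(L.V x - L.b) - q - lam) := by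
            apply mul_le_mul_of_nonneg_right _ (Real.exp_nonneg _)
            calc Real.exp (q+lam) = Real.exp (q+lam)^1 := (pow_one _).symm
            _ ≤ Real.exp (q+lam)^(m'+1) := pow_le_pow_right₀ hMr1 (by omega)
  | succ T IH =>
    intro m x
    cases m with
    | zero => rw [NN_zero]; exact zero_le
    | succ m' =>
      rw [NN_succ]
      have hc00 : (0:ℝ) ≤ Real.exp (-(lam*T)) * Real.exp (q+lam)^m' := by positivity
      have hstep : ∀ y, NN C L y (if y ∈ L.B then m' else m'+1) T
          ≤ ENNReal.ofReal ((Real.exp (-(lam*T)) * Real.exp (q+lam)^m') *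
              (if y ∈ L.B then Real.exp (L.eta*L.nuMax - q)
               else Real.exp (L.eta*(L.V y - L.b)))) := by
        intro y
        by_cases hy : y ∈ L.B
        · rw [if_pos hy, if_pos hy]
          refine le_trans (IH m' y) (le_of_eq ?_)
          rw [if_pos hy]
        · rw [if_neg hy, if_neg hy]
          refine le_trans (IH (m'+1) y) (le_of_eq ?_)
          rw [if_neg hy]
          rw [pow_succ]
          have e1 : Real.exp (q+lam) * Real.exp (L.eta*(L.V y - L.b) - q - lam)
              = Real.exp (L.eta*(L.V y - L.b)) := by
            rw [← Real.exp_add]; congr 1; ring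
          congr 1
          linear_combination (Real.exp (-(lam*(T:ℝ))) * Real.exp (q+lam)^m') * e1
      calc ∑' y, C.trans x y * NN C L y (if y ∈ L.B then m' else m'+1) T
          ≤ ∑' y, C.trans x y *
              (ENNReal.ofReal (Real.exp (-(lam*T)) * Real.exp (q+lam)^m') *
               ENNReal.ofReal (if y ∈ L.B then Real.exp (L.eta*L.nuMax - q)
                 else Real.exp (L.eta*(L.V y - L.b)))) := by
            apply ENNReal.tsum_le_tsum
            intro y
            rw [← ENNReal.ofReal_mul hc00]
            exact mul_le_mul_right (hstep y) _
        _ = ENNReal.ofReal (Real.exp (-(lam*T)) * Real.exp (q+lam)^m') *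
              ∑' y, C.trans x y *
                ENNReal.ofReal (if y ∈ L.B then Real.exp (L.eta*L.nuMax - q)
                  else Real.exp (L.eta*(L.V y - L.b))) := by
            rw [← ENNReal.tsum_mul_left]
            apply tsum_congr; intro y
            ring
        _ ≤ ENNReal.ofReal
            (Real.exp (-(lam*((T:ℝ)+1))) * Real.exp (q+lam)^(m'+1) *
              (if x ∈ L.B then Real.exp (L.eta*L.nuMax - q)
               else Real.exp (L.eta*(L.V x - L.b) - q - lam))) := by
            by_cases hx : x ∈ L.B
            · rw [if_pos hx]
              refine le_trans (mul_le_mul_right (stepB L hη hx q hq) _) (le_of_eq ?_)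
              rw [← ENNReal.ofReal_mul hc00]
              congr 1
              rw [pow_succ]
              have e1 : Real.exp (-(lam*((T:ℝ)+1))) *
                  (Real.exp (q+lam) * Real.exp (L.eta*L.nuMax - q))
                  = Real.exp (-(lam*(T:ℝ))) * Real.exp (L.eta*L.nuMax) := by
                rw [← Real.exp_add, ← Real.exp_add, ← Real.exp_add]; congr 1; ring
              linear_combination (-(Real.exp (q+lam)^m')) * e1
            · rw [if_neg hx]
              refine le_trans (mul_le_mul_right (stepOut L hη ha hρ hx q) _) ?_
              rw [← ENNReal.ofReal_mul hc00]
              apply ENNReal.ofReal_le_ofReal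
              have hKb : (max (Real.exp (2*(L.eta*L.nuMax) - q)) 1) * (L.rho * Real.exp lam) ≤ 1 := by
                rcases max_cases (Real.exp (2*(L.eta*L.nuMax) - q)) 1 with ⟨heq, _⟩|⟨heq, _⟩ <;>
                  rw [heq]
                · have e2 : Real.exp (2*(L.eta*L.nuMax) - q) * (L.rho * Real.exp lam)
                      = L.rho * Real.exp (lam + (2*(L.eta*L.nuMax) - q)) := by
                    rw [Real.exp_add]; ring
                  rw [e2]; exact hC2
                · rw [one_mul]; exact hC1
              have hKρ : (max (Real.exp (2*(L.eta*L.nuMax) - q)) 1) * L.rho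
                  ≤ Real.exp (-lam) := by
                rw [Real.exp_neg, ← one_div]
                rw [le_div_iff₀ (Real.exp_pos lam)]
                rw [mul_assoc]
                exact hKb
              have hE : (0:ℝ) ≤ Real.exp (L.eta*(L.V x - L.b)) := Real.exp_nonneg _
              calc Real.exp (-(lam*(T:ℝ))) * Real.exp (q+lam)^m' *
                    ((max (Real.exp (2*(L.eta*L.nuMax) - q)) 1) *
                      (L.rho * Real.exp (L.eta*(L.V x - L.b))))
                  = ((max (Real.exp (2*(L.eta*L.nuMax) - q)) 1) * L.rho) *
                    (Real.exp (-(lam*(T:ℝ))) * Real.exp (q+lam)^m' *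
                      Real.exp (L.eta*(L.V x - L.b))) := by ring
                _ ≤ Real.exp (-lam) *
                    (Real.exp (-(lam*(T:ℝ))) * Real.exp (q+lam)^m' *
                      Real.exp (L.eta*(L.V x - L.b))) :=
                    mul_le_mul_of_nonneg_right hKρ (by positivity)
                _ = Real.exp (-(lam*((T:ℝ)+1))) * Real.exp (q+lam)^(m'+1) *
                      Real.exp (L.eta*(L.V x - L.b) - q - lam) := by
                    rw [pow_succ]
                    have e3 : Real.exp (-lam) * Real.exp (-(lam*(T:ℝ)))
                        = Real.exp (-(lam*((T:ℝ)+1))) := by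
                      rw [← Real.exp_add]; congr 1; ring
                    have e4 : Real.exp (q+lam) * Real.exp (L.eta*(L.V x - L.b) - q - lam)
                        = Real.exp (L.eta*(L.V x - L.b)) := by
                      rw [← Real.exp_add]; congr 1; ring
                    linear_combination (Real.exp (q+lam)^m' * Real.exp (L.eta*(L.V x - L.b))) * e3
                      - (Real.exp (q+lam)^m' * Real.exp (-(lam*((T:ℝ)+1)))) * e4
        _ = ENNReal.ofReal
            (Real.exp (-(lam*((T+1 : ℕ) : ℝ))) * Real.exp (q+lam)^(m'+1) *
              (if x ∈ L.B then Real.exp (L.eta*L.nuMax - q)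
               else Real.exp (L.eta*(L.V x - L.b) - q - lam))) := by
            push_cast
            rfl

end InvariantAux


section VisitAux

variable {S : Type*} [MeasurableSpace S] [MeasurableSingletonClass S] [Countable S]

/-- number of `1 ≤ k ≤ T` with `f k ∈ B` -/
def cntN {C : Chain S} (L : LyapunovData C) (f : ℕ → S) (T : ℕ) : ℕ :=
  ∑ k ∈ Finset.range (T+1), if k ≠ 0 ∧ f k ∈ L.B then 1 else 0

lemma cntN_mono {C : Chain S} (L : LyapunovData C) (f : ℕ → S) {T T' : ℕ} (h : T ≤ T') :
    cntN L f T ≤ cntN L f T' := by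
  apply Finset.sum_le_sum_of_subset_of_nonneg
  · exact Finset.range_subset_range.mpr (by omega)
  · intro k _ _; positivity

lemma cntN_succ {C : Chain S} (L : LyapunovData C) (f : ℕ → S) (T : ℕ) :
    cntN L f (T+1) = cntN L f T + (if f (T+1) ∈ L.B then 1 else 0) := by
  rw [cntN, Finset.sum_range_succ, cntN]
  congr 1
  simp

lemma visit_le_iff {C : Chain S} (L : LyapunovData C) (f : ℕ → S) :
    ∀ (m T : ℕ), (L.visitTime f m ≤ (T:ℕ∞)) ↔ m ≤ cntN L f T := by
  intro m
  induction m with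
  | zero =>
    intro T
    constructor
    · intro _; exact Nat.zero_le _
    · intro _
      show L.visitTime f 0 ≤ (T:ℕ∞)
      rw [LyapunovData.visitTime]
      exact zero_le
  | succ m ih =>
    intro T
    constructor
    · intro h
      have hex : ∃ k : ℕ, k ≤ T ∧ L.visitTime f m < (k:ℕ∞) ∧ f k ∈ L.B := by
        by_contra hno
        push_neg at hno
        have hsub : ∀ n ∈ {n : ℕ∞ | ∃ k : ℕ, n = (k:ℕ∞) ∧ L.visitTime f m < (k:ℕ∞) ∧ f k ∈ L.B},
            ((T+1 : ℕ) : ℕ∞) ≤ n := by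
          rintro n ⟨k, rfl, hk1, hk2⟩
          by_cases hkT : k ≤ T
          · exact absurd hk2 (hno k hkT hk1)
          · exact_mod_cast Nat.succ_le_of_lt (lt_of_not_ge hkT)
        rw [LyapunovData.visitTime] at h
        have h2 := le_trans (le_sInf hsub) h
        have : (T+1 : ℕ) ≤ T := by exact_mod_cast h2
        omega
      obtain ⟨k, hkT, hklt, hkB⟩ := hex
      have hk1 : 1 ≤ k := by
        rcases Nat.eq_zero_or_pos k with h0 | h1
        · subst h0
          simp at hklt
        · exact h1
      obtain ⟨j, hj, hjk⟩ : ∃ j : ℕ, L.visitTime f m = (j:ℕ∞) ∧ j < k := by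
        have hne : L.visitTime f m ≠ ⊤ := (hklt.trans_le le_top).ne
        lift L.visitTime f m to ℕ using hne with j hj
        exact ⟨j, rfl, by exact_mod_cast hklt⟩
      have h2 : L.visitTime f m ≤ ((k-1 : ℕ) : ℕ∞) := by
        rw [hj]
        exact_mod_cast Nat.le_sub_one_of_lt hjk
      have h3 : m ≤ cntN L f (k-1) := (ih (k-1)).mp h2
      have h4 : cntN L f k = cntN L f (k-1) + 1 := by
        have hk : k = (k-1) + 1 := by omega
        rw [hk, cntN_succ, ← hk, if_pos hkB]
      have h5 : cntN L f k ≤ cntN L f T := cntN_mono L f hkT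
      omega
    · intro h
      induction T with
      | zero =>
        exfalso
        have : cntN L f 0 = 0 := by
          rw [cntN]
          apply Finset.sum_eq_zero
          intro k hk
          have : k = 0 := by simpa using hk
          simp [this]
        omega
      | succ T ihT =>
        by_cases hc : m+1 ≤ cntN L f T
        · exact le_trans (ihT hc) (by exact_mod_cast Nat.le_succ T)
        · have hsucc := cntN_succ L f T
          have hB : f (T+1) ∈ L.B := by
            by_cases hb : f (T+1) ∈ L.B
            · exact hb
            · rw [if_neg hb] at hsucc; omega
          have hcm : m ≤ cntN L f T := by
            rw [if_pos hB] at hsucc; omega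
          have hm : L.visitTime f m ≤ (T:ℕ∞) := (ih T).mpr hcm
          show L.visitTime f (m+1) ≤ _
          rw [LyapunovData.visitTime]
          apply sInf_le
          refine ⟨T+1, by norm_cast, ?_, hB⟩
          calc L.visitTime f m ≤ (T:ℕ∞) := hm
          _ < ((T+1 : ℕ) : ℕ∞) := by exact_mod_cast Nat.lt_succ_self T
      
lemma visitTime_univ {C : Chain S} (L : LyapunovData C) (h : ∀ x : S, L.V x ≤ L.b)
    (f : ℕ → S) : ∀ m, L.visitTime f m = (m:ℕ∞) := by
  intro m
  induction m with
  | zero => rw [LyapunovData.visitTime]; rfl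
  | succ m ih =>
    rw [LyapunovData.visitTime]
    apply le_antisymm
    · apply sInf_le
      refine ⟨m+1, by norm_cast, ?_, h _⟩
      rw [ih]
      exact_mod_cast Nat.lt_succ_self m
    · apply le_sInf
      rintro n ⟨k, rfl, hk, _⟩
      rw [ih] at hk
      have : m < k := by exact_mod_cast hk
      exact_mod_cast Nat.succ_le_of_lt this

lemma cnt_restrict {C : Chain S} (L : LyapunovData C) (f : ℕ → S) (T : ℕ) :
    cntN L f T = cntB L (fun k : Fin (T+1) => f (k : ℕ)) := by
  rw [cntN, cntB, ← Fin.sum_univ_eq_sum_range (fun k : ℕ => if k ≠ 0 ∧ f k ∈ L.B then 1 else 0) (T+1)]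
  apply Finset.sum_congr rfl
  intro k _
  congr 1
  simp only [eq_iff_iff, and_congr_left_iff]
  intro _
  rw [not_iff_not, Fin.ext_iff]
  simp

end VisitAux

/-- Lemma 18 of the paper. For a chain satisfying Assumption L,
`i ∈ B`, a positive integer `W` and a real `Z ≥ W`, the time `S_W` of the `W`-th visit
to `B` satisfies
`P_i(S_W > Z) ≤ exp((0.8(1−ρ)/e^{ην_max})·(1.25 W e^{2ην_max}/((1−ρ)(e^{ην_max}−ρ)) + W − Z))`. -/
theorem statement18 {S : Type*} [MeasurableSpace S] [MeasurableSingletonClass S] [Countable S]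
    (C : Chain S) (hirr : C.Irreducible) (L : LyapunovData C)
    (i : S) (hi : i ∈ L.B) (W : ℕ) (hW : 1 ≤ W) (Z : ℝ) (hZ : (W : ℝ) ≤ Z) :
    (C.μ i {f | ∀ n : ℕ, L.visitTime f W = (n : ℕ∞) → Z < (n : ℝ)}).toReal ≤
      Real.exp (0.8 * (1 - L.rho) / Real.exp (L.eta * L.nuMax) *
        (1.25 * W * Real.exp (2 * L.eta * L.nuMax) /
            ((1 - L.rho) * (Real.exp (L.eta * L.nuMax) - L.rho)) + W - Z)) := by
  classical
  by_cases hall : ∀ x : S, L.V x ≤ L.b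
  · -- `B` is everything : the event is empty
    have hempty : {f : ℕ → S | ∀ n : ℕ, L.visitTime f W = (n : ℕ∞) → Z < (n : ℝ)} = ∅ := by
      ext f
      simp only [Set.mem_setOf_eq, Set.mem_empty_iff_false, iff_false, not_forall]
      push_neg
      refine ⟨W, visitTime_univ L hall f W, by linarith⟩
    rw [hempty]
    simp only [measure_empty, ENNReal.toReal_zero]
    positivity
  · push_neg at hall
    obtain ⟨x₀, hx₀⟩ := hall
    have hec : (0:ℝ) < Real.exp 1 - 2 := by have := Real.exp_one_gt_d9; linarith
    have hec1 : (0.71828:ℝ) ≤ Real.exp 1 - 2 := by have := Real.exp_one_gt_d9; linarith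
    have hec2 : Real.exp 1 - 2 ≤ 0.71829 := by have := Real.exp_one_lt_d9; linarith
    have hν := L.nuMax_pos
    have hγ := L.gam_pos
    have hη : 0 < L.eta := by rw [LyapunovData.eta]; positivity
    have hγν : L.gam < L.nuMax := gam_lt_nu L hx₀
    set a := L.eta * L.nuMax with hadef
    have ha0 : 0 < a := by positivity
    have haval : a = L.gam / (2*(Real.exp 1 - 2)*L.nuMax) := by
      rw [hadef, LyapunovData.eta]
      field_simp
    have ha : a ≤ 0.6962 := by
      rw [haval, div_le_iff₀ (by positivity)]
      nlinarith
    have hca : 1 - L.rho = (Real.exp 1 - 2) * a^2 := by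
      rw [LyapunovData.rho, hadef, LyapunovData.eta]
      field_simp
      ring
    have ha2 : a^2 ≤ 0.4847 := by nlinarith
    have hcaU : (Real.exp 1 - 2) * a^2 ≤ 0.34816 :=
      le_trans (mul_le_mul hec2 ha2 (sq_nonneg a) (by norm_num)) (by norm_num)
    have hρ0 : (0:ℝ) ≤ L.rho := by linarith
    have hea1 : (1:ℝ) ≤ Real.exp a := Real.one_le_exp ha0.le
    set lam := 0.8 * (1 - L.rho) / Real.exp a with hlamdef
    have hlam0 : 0 ≤ lam := by
      rw [hlamdef, hca]
      positivity
    have hlam_le : lam ≤ 0.8 * ((Real.exp 1 - 2) * a^2) := by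
      rw [hlamdef, hca]
      apply div_le_self (by positivity) hea1
    have heρ : 0 < Real.exp a - L.rho := by nlinarith [sq_nonneg a, hca, ha0, hec]
    set q := Real.exp a / (Real.exp a - L.rho) with hqdef
    have hq0 : 0 ≤ q := by
      rw [hqdef]
      positivity
    have hcore := core_bounds hec1 hec2 ha0 ha
    have hsub : Real.exp a - L.rho = Real.exp a - 1 + (Real.exp 1 - 2)*a^2 := by
      rw [← hca]; ring
    have hN1 : a + lam ≤ q := by
      rw [hqdef, le_div_iff₀ heρ, hsub]
      have h1 := hcore.1
      have hD : (0:ℝ) ≤ Real.exp a - 1 + (Real.exp 1 - 2)*a^2 := by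
        nlinarith [hea1, sq_nonneg a, hec]
      nlinarith [hlam_le, hD]
    have hN2 : 2*a - 0.2*((Real.exp 1 - 2)*a^2) ≤ q := by
      rw [hqdef, le_div_iff₀ heρ, hsub]
      have h1 := hcore.2
      linarith
    have hC1 : L.rho * Real.exp lam ≤ 1 := by
      have h1 : L.rho ≤ Real.exp (-((Real.exp 1 - 2)*a^2)) := by
        have h2 := Real.add_one_le_exp (-((Real.exp 1 - 2)*a^2))
        linarith
      have h2 : Real.exp lam ≤ Real.exp ((Real.exp 1 - 2)*a^2) :=
        Real.exp_le_exp.mpr (by nlinarith)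
      calc L.rho * Real.exp lam
          ≤ Real.exp (-((Real.exp 1 - 2)*a^2)) * Real.exp ((Real.exp 1 - 2)*a^2) :=
            mul_le_mul h1 h2 (Real.exp_nonneg _) (Real.exp_nonneg _)
      _ = 1 := by rw [← Real.exp_add]; simp
    have hC2 : L.rho * Real.exp (lam + (2*a - q)) ≤ 1 := by
      have h1 : L.rho ≤ Real.exp (-((Real.exp 1 - 2)*a^2)) := by
        have h2 := Real.add_one_le_exp (-((Real.exp 1 - 2)*a^2))
        linarith
      have h2 : Real.exp (lam + (2*a - q)) ≤ Real.exp ((Real.exp 1 - 2)*a^2) :=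
        Real.exp_le_exp.mpr (by nlinarith [hlam_le, hN2])
      calc L.rho * Real.exp (lam + (2*a - q))
          ≤ Real.exp (-((Real.exp 1 - 2)*a^2)) * Real.exp ((Real.exp 1 - 2)*a^2) :=
            mul_le_mul h1 h2 (Real.exp_nonneg _) (Real.exp_nonneg _)
      _ = 1 := by rw [← Real.exp_add]; simp
    set T := ⌊Z⌋₊ with hTdef
    have hW1 : (1:ℝ) ≤ (W:ℝ) := by exact_mod_cast hW
    have hZ0 : (0:ℝ) ≤ Z := by linarith
    have hTZ : (T:ℝ) ≤ Z := Nat.floor_le hZ0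
    have hZT : Z < (T:ℝ) + 1 := Nat.lt_floor_add_one Z
    have hev : {f : ℕ → S | ∀ n : ℕ, L.visitTime f W = (n : ℕ∞) → Z < (n : ℝ)}
        = {f : ℕ → S | (fun s : Fin (T+1) → S => cntB L s < W) (fun k : Fin (T+1) => f (k:ℕ))} := by
      ext f
      simp only [Set.mem_setOf_eq]
      rw [← cnt_restrict L f T]
      constructor
      · intro hf
        by_contra hc
        push_neg at hc
        have h1 : L.visitTime f W ≤ (T:ℕ∞) := (visit_le_iff L f W T).mpr hc
        obtain ⟨n, hn, hnT⟩ := WithTop.le_coe_iff.mp h1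
        have h2 := hf n hn
        have h3 : (n:ℝ) ≤ (T:ℝ) := by exact_mod_cast hnT
        linarith
      · intro hf n hn
        have h1 : ¬ L.visitTime f W ≤ (T:ℕ∞) := by
          intro h
          have := (visit_le_iff L f W T).mp h
          omega
        rw [hn] at h1
        have h2 : T < n := by
          have := lt_of_not_ge h1
          exact_mod_cast this
        have h3 : (T:ℝ) + 1 ≤ (n:ℝ) := by exact_mod_cast h2
        linarith
    rw [hev, bridge C i T (fun s => cntB L s < W)]
    have hkey := invariant L hη.le ha hρ0 q lam hq0 hlam0 hC1
      (by
        have : lam + (2*(L.eta*L.nuMax) - q) = lam + (2*a - q) := by rw [← hadef]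
        rw [this]
        exact hC2) T W i
    rw [if_pos hi] at hkey
    refine le_trans (ENNReal.toReal_mono ENNReal.ofReal_ne_top (le_of_eq ?_ |>.trans hkey)) ?_
    · rw [NN]
      refine tsum_congr fun s => ?_
      by_cases h : s 0 = i ∧ cntB L s < W
      · rw [if_pos h, if_pos h]
      · rw [if_neg h, if_neg h]
    rw [ENNReal.toReal_ofReal (by positivity)]
    have hpow : Real.exp (q+lam)^W = Real.exp ((W:ℝ)*(q+lam)) := (Real.exp_nat_mul _ W).symm
    rw [hpow, ← Real.exp_add, ← Real.exp_add]
    apply Real.exp_le_exp.mpr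
    have h2a : Real.exp (2 * L.eta * L.nuMax) = Real.exp a * Real.exp a := by
      rw [← Real.exp_add, hadef]
      congr 1
      ring
    have h1ρ : 1 - L.rho ≠ 0 := by rw [hca]; positivity
    have hea0 : Real.exp a ≠ 0 := (Real.exp_pos a).ne'
    have heρ' : Real.exp a - L.rho ≠ 0 := heρ.ne'
    have htarget : 0.8 * (1 - L.rho) / Real.exp (L.eta * L.nuMax) *
        (1.25 * W * Real.exp (2 * L.eta * L.nuMax) /
            ((1 - L.rho) * (Real.exp (L.eta * L.nuMax) - L.rho)) + W - Z)
        = q*W + lam*W - lam*Z := by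
      rw [← hadef, h2a, hqdef, hlamdef]
      field_simp
      ring
    rw [htarget]
    have hfac : lam*Z - lam*(T:ℝ) = lam*(Z - T) := by ring
    have hZT1 : lam*(Z - (T:ℝ)) ≤ lam := by nlinarith
    linarith [hN1]


end

end LocalStationary
end
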